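/- arXiv:0804.2704 — 4 statements merged into one kernel-verified Lean document; each statement's English description precedes it below -/
import Mathlib

section
/- The spectrum of the hierarchical Laplacean −Δ on ℝ^{Λ_K} consists exactly of the numbers λ_k = (L^{−2k} − L^{−2K})/(L² − 1) for k = 0,…,K; for 0 ≤ k ≤ K−1, λ_k is an eigenvalue of multiplicity rank Q_k = L^{d(K−k)} − L^{d(K−k−1)} = L^{d(K−k)}(1 − L^{−d}), and λ_K = 0 is a simple eigenvalue whose eigenspace is spanned by the constant vector. -/
open Matrix

noncomputable section

/-- A digit: an element of `{0,…,L−1}^d`. -/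
abbrev HierDigit (L d : ℕ) := Fin d → Fin L

/-- A site of `Λ_K`: a string `θ = (θ_1,…,θ_K)` of digits. -/
abbrev HierSite (L d K : ℕ) := Fin K → HierDigit L d

/-- The matrix of the `a`-fold block operator `B^a : ℝ^{Λ_{a+b}} → ℝ^{Λ_b}`:
`(B^a u)_τ = L^{−da/2} Σ_{η ∈ ({0,…,L−1}^d)^a} u_{(η,τ)}`.  For `a = 1` this is the
block operator `B` itself. -/
def hierB (L d : ℕ) (a b : ℕ) : Matrix (HierSite L d b) (HierSite L d (a + b)) ℝ :=
  fun τ θ =>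
    if (fun i : Fin b => θ (Fin.natAdd a i)) = τ then (Real.sqrt ((L : ℝ) ^ (d * a)))⁻¹ else 0

/-- The projection `P_k = (B*)^k B^k` on `ℝ^{Λ_K}` (for `k ≤ K`; junk value `0` otherwise). -/
def hierP (L d K : ℕ) (k : ℕ) : Matrix (HierSite L d K) (HierSite L d K) ℝ :=
  if h : k ≤ K then
    (Matrix.reindex
      (Equiv.arrowCongr (finCongr (Nat.add_sub_cancel' h)) (Equiv.refl (HierDigit L d)))
      (Equiv.arrowCongr (finCongr (Nat.add_sub_cancel' h)) (Equiv.refl (HierDigit L d))))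
      ((hierB L d k (K - k))ᵀ * hierB L d k (K - k))
  else 0

/-- The fluctuation operator `Q_k = P_k − P_{k+1}` for `0 ≤ k ≤ K−1` and `Q_K = P_K`
(the junk value `hierP L d K (K+1) = 0` makes the single formula correct for `k = K`). -/
def hierQ (L d K : ℕ) (k : ℕ) : Matrix (HierSite L d K) (HierSite L d K) ℝ :=
  hierP L d K k - hierP L d K (k + 1)

/-- The hierarchical Laplacean `−Δ = Σ_{k=1}^K L^{−2k}(I − P_k)`. -/
def hierLap (L d K : ℕ) : Matrix (HierSite L d K) (HierSite L d K) ℝ :=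
  ∑ k ∈ Finset.Icc 1 K, ((L : ℝ) ^ (2 * k))⁻¹ • ((1 : Matrix _ _ ℝ) - hierP L d K k)

/-- The eigenvalues `λ_k = (L^{−2k} − L^{−2K})/(L² − 1)` of the hierarchical Laplacean. -/
noncomputable def hierEig (L K : ℕ) (k : ℕ) : ℝ :=
  (((L : ℝ) ^ (2 * k))⁻¹ - ((L : ℝ) ^ (2 * K))⁻¹) / ((L : ℝ) ^ 2 - 1)

namespace HP

/-! ### The explicit form of the projections -/

def tl (L d K k : ℕ) (θ θ' : HierSite L d K) : Prop :=
  ∀ i : Fin K, k ≤ i.1 → θ i = θ' i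

instance (L d K k : ℕ) (θ θ' : HierSite L d K) : Decidable (tl L d K k θ θ') := by
  unfold tl; infer_instance

def Pm (L d K k : ℕ) : Matrix (HierSite L d K) (HierSite L d K) ℝ :=
  Matrix.of fun θ θ' => if tl L d K k θ θ' then ((L : ℝ) ^ (d * k))⁻¹ else 0

variable {L d K : ℕ}

lemma tl_comm {k : ℕ} {θ θ' : HierSite L d K} : tl L d K k θ θ' ↔ tl L d K k θ' θ :=
  ⟨fun h i hi => (h i hi).symm, fun h i hi => (h i hi).symm⟩

lemma Pm_transpose (k : ℕ) : (Pm L d K k)ᵀ = Pm L d K k := by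
  ext θ θ'
  simp only [Matrix.transpose_apply, Pm, Matrix.of_apply]
  exact if_congr tl_comm rfl rfl

lemma Pm_zero : Pm L d K 0 = 1 := by
  ext θ θ'
  simp only [Pm, Matrix.of_apply, Matrix.one_apply, Nat.mul_zero, pow_zero, inv_one]
  refine if_congr ?_ rfl rfl
  constructor
  · intro h; funext i; exact h i (Nat.zero_le _)
  · intro h i _; rw [h]

lemma card_digit : Fintype.card (HierDigit L d) = L ^ d := by simp [Fintype.card_fun]

lemma card_site : Fintype.card (HierSite L d K) = L ^ (d * K) := by
  rw [Fintype.card_fun, card_digit, Fintype.card_fin, ← pow_mul]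

lemma card_filter_lt {k : ℕ} (hk : k ≤ K) :
    (Finset.univ.filter (fun i : Fin K => i.1 < k)).card = k := by
  have : (Finset.univ.filter (fun i : Fin K => i.1 < k))
      = Finset.map (Fin.castLEEmb hk) Finset.univ := by
    ext i
    simp only [Finset.mem_filter, Finset.mem_univ, true_and, Finset.mem_map,
      Fin.castLEEmb_apply]
    constructor
    · intro h; exact ⟨⟨i.1, h⟩, by ext; rfl⟩
    · rintro ⟨j, rfl⟩; exact j.2
  rw [this, Finset.card_map, Finset.card_univ, Fintype.card_fin]

lemma hierP_eq {k : ℕ} (hk : k ≤ K) : hierP L d K k = Pm L d K k := by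
  ext θ θ'
  rw [hierP, dif_pos hk]
  have hKk : k + (K - k) = K := Nat.add_sub_cancel' hk
  set e := Equiv.arrowCongr (finCongr hKk) (Equiv.refl (HierDigit L d)) with he
  rw [Matrix.reindex_apply, Matrix.submatrix_apply, Matrix.mul_apply]
  set c := (Real.sqrt ((L : ℝ) ^ (d * k)))⁻¹ with hc
  have hBapp : ∀ (ψ : HierSite L d K) (τ : HierSite L d (K - k)),
      hierB L d k (K - k) τ (e.symm ψ)
        = if (fun i : Fin (K - k) => ψ (finCongr hKk (Fin.natAdd k i))) = τ then c else 0 := by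
    intro ψ τ; rfl
  simp only [Matrix.transpose_apply, hBapp]
  have hsum : (∑ τ : HierSite L d (K - k),
      (if (fun i : Fin (K - k) => θ (finCongr hKk (Fin.natAdd k i))) = τ then c else 0) *
      (if (fun i : Fin (K - k) => θ' (finCongr hKk (Fin.natAdd k i))) = τ then c else 0))
      = if (fun i : Fin (K - k) => θ (finCongr hKk (Fin.natAdd k i)))
          = (fun i : Fin (K - k) => θ' (finCongr hKk (Fin.natAdd k i))) then c * c else 0 := by
    rw [Finset.sum_eq_single ((fun i : Fin (K - k) => θ (finCongr hKk (Fin.natAdd k i))))]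
    · rw [if_pos rfl]
      by_cases h : (fun i : Fin (K - k) => θ' (finCongr hKk (Fin.natAdd k i)))
          = (fun i : Fin (K - k) => θ (finCongr hKk (Fin.natAdd k i)))
      · rw [if_pos h, if_pos h.symm]
      · rw [if_neg h, if_neg (fun hh => h hh.symm), mul_zero]
    · intro τ _ hτ
      rw [if_neg (fun hh => hτ hh.symm), zero_mul]
    · intro h; exact absurd (Finset.mem_univ _) h
  rw [hsum]
  have hcc : c * c = ((L : ℝ) ^ (d * k))⁻¹ := by
    rw [hc, ← mul_inv, Real.mul_self_sqrt (by positivity)]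
  have hiff : ((fun i : Fin (K - k) => θ (finCongr hKk (Fin.natAdd k i)))
      = fun i : Fin (K - k) => θ' (finCongr hKk (Fin.natAdd k i))) ↔ tl L d K k θ θ' := by
    constructor
    · intro h i hi
      have hlt : i.1 - k < K - k := by omega
      have := congrFun h ⟨i.1 - k, hlt⟩
      simpa only [finCongr_apply, Fin.cast_mk, Fin.natAdd_mk,
        show k + (i.1 - k) = i.1 by omega, Fin.eta, Fin.cast] using this
    · intro h; funext i
      exact h _ (by simp [Fin.le_def])
  rw [hcc]
  simp only [Pm, Matrix.of_apply]
  exact if_congr hiff rfl rfl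

/-! ### Products of the projections -/

lemma prod_ite_tl (m : ℕ) (x y : HierSite L d K) :
    (∏ i : Fin K, (if m ≤ i.1 → x i = y i then (1 : ℝ) else 0))
      = if tl L d K m x y then (1 : ℝ) else 0 := by
  by_cases h : tl L d K m x y
  · rw [if_pos h, Finset.prod_congr rfl (fun i _ => if_pos (h i)), Finset.prod_const_one]
  · rw [if_neg h]
    obtain ⟨i, hi⟩ : ∃ i : Fin K, ¬(m ≤ i.1 → x i = y i) := by
      by_contra hc
      push_neg at hc
      exact h fun i hm => (hc i) hm
    exact Finset.prod_eq_zero (Finset.mem_univ i) (if_neg hi)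

lemma ite_tl_eq_prod (m : ℕ) (x y : HierSite L d K) :
    (if tl L d K m x y then ((L : ℝ) ^ (d * m))⁻¹ else 0)
      = ((L : ℝ) ^ (d * m))⁻¹ * ∏ i : Fin K, (if m ≤ i.1 → x i = y i then (1 : ℝ) else 0) := by
  rw [prod_ite_tl, mul_ite, mul_one, mul_zero]

lemma Pm_mul (hL : 1 ≤ L) {k j : ℕ} (hkj : k ≤ j) (hjK : j ≤ K) :
    Pm L d K k * Pm L d K j = Pm L d K j := by
  have hL0 : (L : ℝ) ≠ 0 := Nat.cast_ne_zero.mpr (by omega)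
  ext θ θ'
  rw [Matrix.mul_apply]
  set ck := ((L : ℝ) ^ (d * k))⁻¹ with hck
  set cj := ((L : ℝ) ^ (d * j))⁻¹ with hcj
  have step1 : ∀ η : HierSite L d K,
      Pm L d K k θ η * Pm L d K j η θ'
        = ck * cj * ∏ i : Fin K,
            ((if k ≤ i.1 → θ i = η i then (1 : ℝ) else 0) *
             (if j ≤ i.1 → η i = θ' i then (1 : ℝ) else 0)) := by
    intro η
    rw [Finset.prod_mul_distrib]
    show (if tl L d K k θ η then ck else 0) * (if tl L d K j η θ' then cj else 0) = _
    rw [ite_tl_eq_prod, ite_tl_eq_prod]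
    ring
  rw [Finset.sum_congr rfl (fun η _ => step1 η), ← Finset.mul_sum]
  have step2 : (∑ η : HierSite L d K, ∏ i : Fin K,
      ((if k ≤ i.1 → θ i = η i then (1 : ℝ) else 0) *
       (if j ≤ i.1 → η i = θ' i then (1 : ℝ) else 0)))
      = ∏ i : Fin K, ∑ a : HierDigit L d,
          ((if k ≤ i.1 → θ i = a then (1 : ℝ) else 0) *
           (if j ≤ i.1 → a = θ' i then (1 : ℝ) else 0)) := by
    rw [← Fintype.piFinset_univ,
      Finset.sum_prod_piFinset (Finset.univ : Finset (HierDigit L d))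
        (fun (i : Fin K) (a : HierDigit L d) =>
          (if k ≤ i.1 → θ i = a then (1 : ℝ) else 0) *
            (if j ≤ i.1 → a = θ' i then (1 : ℝ) else 0))]
  rw [step2]
  have hwi : ∀ i : Fin K, (∑ a : HierDigit L d,
      ((if k ≤ i.1 → θ i = a then (1 : ℝ) else 0) *
       (if j ≤ i.1 → a = θ' i then (1 : ℝ) else 0)))
      = (if k ≤ i.1 then 1 else ((L : ℝ) ^ d)) *
        (if j ≤ i.1 → θ i = θ' i then (1 : ℝ) else 0) := by
    intro i
    by_cases hki : k ≤ i.1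
    · by_cases hji : j ≤ i.1
      · have hpt : ∀ a : HierDigit L d,
            (if k ≤ i.1 → θ i = a then (1 : ℝ) else 0) *
              (if j ≤ i.1 → a = θ' i then (1 : ℝ) else 0)
              = if a = θ i then (if θ i = θ' i then (1 : ℝ) else 0) else 0 := by
          intro a
          by_cases h : a = θ i
          · rw [if_pos h, if_pos (show k ≤ i.1 → θ i = a from fun _ => h.symm), one_mul]
            exact if_congr ⟨fun hh => h.symm.trans (hh hji), fun hh _ => h.trans hh⟩ rfl rfl
          · rw [if_neg (fun hcon => h (hcon hki).symm), zero_mul, if_neg h]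
        rw [Finset.sum_congr rfl (fun a _ => hpt a), Finset.sum_ite_eq' Finset.univ (θ i),
          if_pos (Finset.mem_univ _), if_pos hki, one_mul]
        exact if_congr ⟨fun h _ => h, fun h => h hji⟩ rfl rfl
      · have hpt : ∀ a : HierDigit L d,
            (if k ≤ i.1 → θ i = a then (1 : ℝ) else 0) *
              (if j ≤ i.1 → a = θ' i then (1 : ℝ) else 0)
              = if θ i = a then (1 : ℝ) else 0 := by
          intro a
          rw [if_pos (fun h => absurd h hji), mul_one]
          exact if_congr ⟨fun h => h hki, fun h _ => h⟩ rfl rfl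
        rw [Finset.sum_congr rfl (fun a _ => hpt a), Finset.sum_ite_eq Finset.univ (θ i),
          if_pos (Finset.mem_univ _), if_pos hki, if_pos (fun h => absurd h hji), one_mul]
    · have hji : ¬ j ≤ i.1 := fun h => hki (hkj.trans h)
      have hpt : ∀ a : HierDigit L d,
          (if k ≤ i.1 → θ i = a then (1 : ℝ) else 0) *
            (if j ≤ i.1 → a = θ' i then (1 : ℝ) else 0) = 1 := by
        intro a
        rw [if_pos (fun h => absurd h hki), if_pos (fun h => absurd h hji), mul_one]
      rw [Finset.sum_congr rfl (fun a _ => hpt a), Finset.sum_const, Finset.card_univ,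
        card_digit, nsmul_eq_mul, mul_one, if_neg hki, if_pos (fun h => absurd h hji),
        mul_one, Nat.cast_pow]
  rw [Finset.prod_congr rfl (fun i _ => hwi i), Finset.prod_mul_distrib]
  have hsecond : (∏ i : Fin K, (if j ≤ i.1 → θ i = θ' i then (1 : ℝ) else 0))
      = if tl L d K j θ θ' then (1 : ℝ) else 0 := prod_ite_tl j θ θ'
  have hfirst : (∏ i : Fin K, (if k ≤ i.1 then (1 : ℝ) else ((L : ℝ) ^ d)))
      = (L : ℝ) ^ (d * k) := by
    rw [Finset.prod_ite, Finset.prod_const_one, one_mul, Finset.prod_const]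
    have hfe : Finset.univ.filter (fun i : Fin K => ¬ k ≤ i.1)
        = Finset.univ.filter (fun i : Fin K => i.1 < k) := by
      ext i; simp [not_le]
    rw [hfe, card_filter_lt (hkj.trans hjK), ← pow_mul]
  rw [hsecond, hfirst]
  show ck * cj * ((L : ℝ) ^ (d * k) * if tl L d K j θ θ' then (1 : ℝ) else 0)
      = Pm L d K j θ θ'
  show _ = if tl L d K j θ θ' then cj else 0
  split_ifs with h
  · rw [mul_one, mul_comm ck cj, mul_assoc, hck, inv_mul_cancel₀ (pow_ne_zero _ hL0), mul_one]
  · rw [mul_zero, mul_zero]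

lemma Pm_mul' (hL : 1 ≤ L) {k j : ℕ} (hkj : k ≤ j) (hjK : j ≤ K) :
    Pm L d K j * Pm L d K k = Pm L d K j := by
  have := congrArg Matrix.transpose (Pm_mul (d := d) hL hkj hjK)
  rwa [Matrix.transpose_mul, Pm_transpose, Pm_transpose] at this

lemma hierP_of_gt {k : ℕ} (h : K < k) : hierP L d K k = 0 := dif_neg (not_le.mpr h)

lemma hierP_zero : hierP L d K 0 = 1 := by rw [hierP_eq (Nat.zero_le K), Pm_zero]

lemma P_mul_left (hL : 1 ≤ L) {k j : ℕ} (h : k ≤ j) :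
    hierP L d K k * hierP L d K j = hierP L d K j := by
  by_cases hj : j ≤ K
  · rw [hierP_eq (h.trans hj), hierP_eq hj, Pm_mul hL h hj]
  · rw [hierP_of_gt (not_le.mp hj), Matrix.mul_zero]

lemma P_mul_right (hL : 1 ≤ L) {k j : ℕ} (h : k ≤ j) :
    hierP L d K j * hierP L d K k = hierP L d K j := by
  by_cases hj : j ≤ K
  · rw [hierP_eq (h.trans hj), hierP_eq hj, Pm_mul' hL h hj]
  · rw [hierP_of_gt (not_le.mp hj), Matrix.zero_mul]

lemma P_transpose (k : ℕ) : (hierP L d K k)ᵀ = hierP L d K k := by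
  by_cases hk : k ≤ K
  · rw [hierP_eq hk, Pm_transpose]
  · rw [hierP_of_gt (not_le.mp hk), Matrix.transpose_zero]

lemma Q_transpose (k : ℕ) : (hierQ L d K k)ᵀ = hierQ L d K k := by
  rw [hierQ, Matrix.transpose_sub, P_transpose, P_transpose]

lemma Q_idem (hL : 1 ≤ L) (k : ℕ) : hierQ L d K k * hierQ L d K k = hierQ L d K k := by
  rw [hierQ, Matrix.sub_mul, Matrix.mul_sub, Matrix.mul_sub,
    P_mul_left hL le_rfl, P_mul_left hL (Nat.le_succ k), P_mul_right hL (Nat.le_succ k),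
    P_mul_left hL le_rfl]
  abel

lemma Q_orth (hL : 1 ≤ L) {i j : ℕ} (hij : i < j) :
    hierQ L d K i * hierQ L d K j = 0 := by
  rw [hierQ, hierQ, Matrix.sub_mul, Matrix.mul_sub, Matrix.mul_sub,
    P_mul_left hL hij.le, P_mul_left hL (hij.le.trans (Nat.le_succ j)),
    P_mul_left hL (Nat.succ_le_of_lt hij),
    P_mul_left hL (Nat.succ_le_succ hij.le)]
  abel

lemma Q_orth' (hL : 1 ≤ L) {i j : ℕ} (hij : i ≠ j) :
    hierQ L d K i * hierQ L d K j = 0 := by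
  rcases lt_or_gt_of_ne hij with h | h
  · exact Q_orth hL h
  · have := congrArg Matrix.transpose (Q_orth (d := d) (K := K) hL h)
    rwa [Matrix.transpose_mul, Q_transpose, Q_transpose, Matrix.transpose_zero] at this

lemma sum_Q : ∑ j ∈ Finset.range (K + 1), hierQ L d K j = 1 := by
  have := Finset.sum_range_sub' (fun j => hierP L d K j) (K + 1)
  simp only [hierQ]
  rw [this, hierP_zero, hierP_of_gt (Nat.lt_succ_self K), sub_zero]

lemma one_sub_P (k : ℕ) :
    (1 : Matrix (HierSite L d K) (HierSite L d K) ℝ) - hierP L d K k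
      = ∑ j ∈ Finset.range k, hierQ L d K j := by
  have := Finset.sum_range_sub' (fun j => hierP L d K j) k
  simp only [hierQ]
  rw [this, hierP_zero]

/-! ### Traces -/

lemma traceP (hL : 1 ≤ L) {k : ℕ} (hk : k ≤ K) :
    (hierP L d K k).trace = (L : ℝ) ^ (d * (K - k)) := by
  rw [hierP_eq hk, Matrix.trace]
  have hdiag : ∀ θ : HierSite L d K, (Pm L d K k).diag θ = ((L : ℝ) ^ (d * k))⁻¹ :=
    fun θ => if_pos (fun i _ => rfl)
  rw [Finset.sum_congr rfl (fun θ _ => hdiag θ), Finset.sum_const, Finset.card_univ,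
    card_site, nsmul_eq_mul, Nat.cast_pow]
  have hsplit : (L : ℝ) ^ (d * K) = (L : ℝ) ^ (d * (K - k)) * (L : ℝ) ^ (d * k) := by
    rw [← pow_add, ← Nat.mul_add, Nat.sub_add_cancel hk]
  rw [hsplit, mul_inv_cancel_right₀ (pow_ne_zero _ (Nat.cast_ne_zero.mpr (by omega)))]

lemma traceQ_lt (hL : 1 ≤ L) {k : ℕ} (hk : k < K) :
    (hierQ L d K k).trace = (L : ℝ) ^ (d * (K - k)) - (L : ℝ) ^ (d * (K - k - 1)) := by
  rw [hierQ, Matrix.trace_sub, traceP hL hk.le, traceP hL hk, Nat.sub_sub]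

lemma traceQ_K (hL : 1 ≤ L) : (hierQ L d K K).trace = 1 := by
  rw [hierQ, hierP_of_gt (Nat.lt_succ_self K), sub_zero, traceP hL le_rfl,
    Nat.sub_self, Nat.mul_zero, pow_zero]

/-! ### The geometric sum and monotonicity of the eigenvalues -/

lemma eig_sum (hL : 2 ≤ L) {j : ℕ} (hj : j ≤ K) :
    ∑ k ∈ Finset.Icc (j + 1) K, ((L : ℝ) ^ (2 * k))⁻¹ = hierEig L K j := by
  have hL1 : (1 : ℝ) < (L : ℝ) := by exact_mod_cast (by omega : 1 < L)
  have hy1 : (1 : ℝ) < (L : ℝ) ^ 2 := by nlinarith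
  have hy0 : ((L : ℝ) ^ 2) ≠ 0 := by positivity
  set y : ℝ := (L : ℝ) ^ 2 with hy
  set x : ℝ := y⁻¹ with hx
  have hx1 : x ≠ 1 := by
    rw [hx, ne_eq, inv_eq_one]; exact hy1.ne'
  have hrw : ∀ k : ℕ, ((L : ℝ) ^ (2 * k))⁻¹ = x ^ k := by
    intro k; rw [pow_mul, hx, inv_pow, hy]
  have hy1' : y - 1 ≠ 0 := sub_ne_zero.mpr hy1.ne'
  have hxne : x - 1 ≠ 0 := sub_ne_zero.mpr hx1
  rw [Finset.sum_congr rfl (fun k _ => hrw k), show Finset.Icc (j + 1) K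
      = Finset.Ico (j + 1) (K + 1) from (Finset.Ico_add_one_right_eq_Icc (j + 1) K).symm,
    geom_sum_Ico hx1 (by omega), hierEig, hrw, hrw]
  rw [div_eq_div_iff hxne hy1']
  have hyx : y * x = 1 := mul_inv_cancel₀ hy0
  have hK' : x ^ (K + 1) * y = x ^ K := by
    rw [pow_succ, mul_assoc, mul_comm x y, hyx, mul_one]
  have hj' : x ^ (j + 1) * y = x ^ j := by
    rw [pow_succ, mul_assoc, mul_comm x y, hyx, mul_one]
  have hpj : x ^ j * x = x ^ (j + 1) := (pow_succ x j).symm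
  have hpK : x ^ K * x = x ^ (K + 1) := (pow_succ x K).symm
  linear_combination hK' - hj' - hpj + hpK

lemma eig_lt (hL : 2 ≤ L) {k j : ℕ} (h : k < j) : hierEig L K j < hierEig L K k := by
  have hL1 : (1 : ℝ) < (L : ℝ) := by exact_mod_cast (by omega : 1 < L)
  have hden : (0 : ℝ) < (L : ℝ) ^ 2 - 1 := by nlinarith
  rw [hierEig, hierEig, div_lt_div_iff_of_pos_right hden]
  have hpow : (L : ℝ) ^ (2 * k) < (L : ℝ) ^ (2 * j) := by
    apply pow_lt_pow_right₀ hL1; omega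
  have hp0 : (0 : ℝ) < (L : ℝ) ^ (2 * k) := by positivity
  have := one_div_lt_one_div_of_lt hp0 hpow
  rw [one_div, one_div] at this
  linarith

lemma eig_ne (hL : 2 ≤ L) {a b : ℕ} (hab : a ≠ b) : hierEig L K a ≠ hierEig L K b := by
  rcases Nat.lt_or_ge a b with h | h
  · exact (eig_lt (K := K) hL h).ne'
  · exact (eig_lt (K := K) hL (by omega : b < a)).ne

/-! ### Generic linear-algebra facts -/

lemma sum_mulVec {ι α : Type*} [Fintype α] [DecidableEq α] (s : Finset ι)
    (M : ι → Matrix α α ℝ) (v : α → ℝ) :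
    (∑ i ∈ s, M i) *ᵥ v = ∑ i ∈ s, (M i *ᵥ v) := by
  ext x
  simp only [Matrix.mulVec, dotProduct, Matrix.sum_apply, Finset.sum_apply,
    Finset.sum_mul]
  exact Finset.sum_comm

lemma trace_mulVecLin {ι : Type*} [Fintype ι] [DecidableEq ι] (M : Matrix ι ι ℝ) :
    LinearMap.trace ℝ (ι → ℝ) M.mulVecLin = M.trace := by
  rw [LinearMap.trace_eq_matrix_trace ℝ (Pi.basisFun ℝ ι), LinearMap.toMatrix_eq_toMatrix',
    ← Matrix.toLin'_apply', LinearMap.toMatrix'_toLin']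

lemma rank_eq_trace {ι : Type*} [Fintype ι] [DecidableEq ι] (M : Matrix ι ι ℝ)
    (h : M * M = M) : (M.rank : ℝ) = M.trace := by
  have hid : M.mulVecLin ∘ₗ M.mulVecLin = M.mulVecLin := by
    rw [← Matrix.mulVecLin_mul, h]
  have hproj : LinearMap.IsProj (LinearMap.range M.mulVecLin) M.mulVecLin := by
    refine ⟨fun x => LinearMap.mem_range_self _ x, ?_⟩
    rintro x ⟨y, rfl⟩
    rw [← LinearMap.comp_apply, hid]
  have htr := hproj.trace
  rw [trace_mulVecLin] at htr
  rw [Matrix.rank]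
  exact htr.symm

/-! ### The spectral decomposition of the Laplacean -/

lemma lap_eq (hL : 2 ≤ L) :
    hierLap L d K = ∑ j ∈ Finset.range (K + 1), hierEig L K j • hierQ L d K j := by
  rw [hierLap]
  have h1 : ∀ k ∈ Finset.Icc 1 K,
      ((L : ℝ) ^ (2 * k))⁻¹ • ((1 : Matrix (HierSite L d K) (HierSite L d K) ℝ) - hierP L d K k)
        = ∑ j ∈ Finset.range (K + 1),
            (if j < k then ((L : ℝ) ^ (2 * k))⁻¹ else 0) • hierQ L d K j := by
    intro k hk
    have hkK : k ≤ K := (Finset.mem_Icc.mp hk).2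
    rw [one_sub_P, Finset.smul_sum]
    have hfilter : (Finset.range (K + 1)).filter (fun j => j < k) = Finset.range k := by
      ext j; simp only [Finset.mem_filter, Finset.mem_range]; omega
    calc (∑ j ∈ Finset.range k, ((L : ℝ) ^ (2 * k))⁻¹ • hierQ L d K j)
        = ∑ j ∈ (Finset.range (K + 1)).filter (fun j => j < k),
            ((L : ℝ) ^ (2 * k))⁻¹ • hierQ L d K j := by rw [hfilter]
      _ = ∑ j ∈ Finset.range (K + 1),
            (if j < k then ((L : ℝ) ^ (2 * k))⁻¹ • hierQ L d K j else 0) :=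
          Finset.sum_filter _ _
      _ = ∑ j ∈ Finset.range (K + 1),
            (if j < k then ((L : ℝ) ^ (2 * k))⁻¹ else 0) • hierQ L d K j := by
          refine Finset.sum_congr rfl fun j _ => ?_
          rw [ite_smul, zero_smul]
  rw [Finset.sum_congr rfl h1, Finset.sum_comm]
  refine Finset.sum_congr rfl fun j hj => ?_
  have hjK : j ≤ K := by
    have := Finset.mem_range.mp hj; omega
  rw [← Finset.sum_smul]
  congr 1
  have hfilter2 : (Finset.Icc 1 K).filter (fun k => j < k) = Finset.Icc (j + 1) K := by
    ext k; simp only [Finset.mem_filter, Finset.mem_Icc]; omega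
  rw [← Finset.sum_filter, hfilter2, eig_sum hL hjK]

end HP

open HP

/-- The spectrum of the hierarchical Laplacean `−Δ` on `ℝ^{Λ_K}` consists
exactly of the numbers `λ_k = (L^{−2k} − L^{−2K})/(L² − 1)`, `k = 0,…,K`; for `k ≤ K−1` the
eigenvalue `λ_k` has multiplicity `rank Q_k = L^{d(K−k)} − L^{d(K−k−1)} = L^{d(K−k)}(1 − L^{−d})`,
and `λ_K = 0` is a simple eigenvalue whose eigenspace is spanned by the constant vector. -/
theorem hierarchical_laplacean_spectrum
    (L d K : ℕ) (hL : 2 ≤ L) (hd : 1 ≤ d) (hK : 1 ≤ K) :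
    (∀ μ : ℝ, Module.End.HasEigenvalue (hierLap L d K).mulVecLin μ ↔
        ∃ k : ℕ, k ≤ K ∧ μ = hierEig L K k) ∧
    (∀ k : ℕ, k < K →
        Module.finrank ℝ (Module.End.eigenspace (hierLap L d K).mulVecLin (hierEig L K k)) =
            L ^ (d * (K - k)) - L ^ (d * (K - k - 1)) ∧
          (hierQ L d K k).rank = L ^ (d * (K - k)) - L ^ (d * (K - k - 1)) ∧
          (L ^ (d * (K - k)) - L ^ (d * (K - k - 1)) : ℝ) =
            (L : ℝ) ^ (d * (K - k)) * (1 - ((L : ℝ) ^ d)⁻¹)) ∧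
    hierEig L K K = 0 ∧
    Module.finrank ℝ (Module.End.eigenspace (hierLap L d K).mulVecLin 0) = 1 ∧
    Module.End.eigenspace (hierLap L d K).mulVecLin 0 =
      Submodule.span ℝ {fun _ : HierSite L d K => (1 : ℝ)} := by
  have hL' : 1 ≤ L := by omega
  have hL1 : (1 : ℝ) < (L : ℝ) := by exact_mod_cast (by omega : 1 < L)
  have hL0 : (L : ℝ) ≠ 0 := Nat.cast_ne_zero.mpr (by omega)
  -- matrix-level spectral facts
  have hQlap : ∀ j, j ≤ K → hierQ L d K j * hierLap L d K = hierEig L K j • hierQ L d K j := by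
    intro j hj
    rw [lap_eq hL, Finset.mul_sum,
      Finset.sum_eq_single_of_mem j (Finset.mem_range.mpr (by omega))]
    · rw [Matrix.mul_smul, Q_idem hL']
    · intro b _ hbj
      rw [Matrix.mul_smul, Q_orth' hL' (Ne.symm hbj), smul_zero]
  have hlapQ : ∀ j, j ≤ K → hierLap L d K * hierQ L d K j = hierEig L K j • hierQ L d K j := by
    intro j hj
    rw [lap_eq hL, Finset.sum_mul,
      Finset.sum_eq_single_of_mem j (Finset.mem_range.mpr (by omega))]
    · rw [Matrix.smul_mul, Q_idem hL']
    · intro b _ hbj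
      rw [Matrix.smul_mul, Q_orth' hL' hbj, smul_zero]
  have hdecomp : ∀ v : HierSite L d K → ℝ,
      ∑ j ∈ Finset.range (K + 1), hierQ L d K j *ᵥ v = v := by
    intro v
    rw [← HP.sum_mulVec, sum_Q, Matrix.one_mulVec]
  have hvanish : ∀ (v : HierSite L d K → ℝ) (μ : ℝ), hierLap L d K *ᵥ v = μ • v →
      ∀ j, j ≤ K → μ ≠ hierEig L K j → hierQ L d K j *ᵥ v = 0 := by
    intro v μ hv j hj hne
    have h1 : hierQ L d K j *ᵥ (hierLap L d K *ᵥ v) = hierEig L K j • (hierQ L d K j *ᵥ v) := by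
      rw [Matrix.mulVec_mulVec, hQlap j hj, Matrix.smul_mulVec]
    rw [hv, Matrix.mulVec_smul] at h1
    have h2 : (μ - hierEig L K j) • (hierQ L d K j *ᵥ v) = 0 := by
      rw [sub_smul, h1, sub_self]
    rcases smul_eq_zero.mp h2 with h | h
    · exact absurd (sub_eq_zero.mp h) hne
    · exact h
  -- nontriviality of the Q's
  have htrpos : ∀ k, k ≤ K → (0 : ℝ) < (hierQ L d K k).trace := by
    intro k hk
    rcases Nat.lt_or_ge k K with h | h
    · rw [traceQ_lt hL' h]
      have : (L : ℝ) ^ (d * (K - k - 1)) < (L : ℝ) ^ (d * (K - k)) := by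
        apply pow_lt_pow_right₀ hL1
        have h1 : K - k - 1 < K - k := by omega
        exact (Nat.mul_lt_mul_left (by omega : 0 < d)).mpr h1
      linarith
    · have hkK : k = K := by omega
      rw [hkK, traceQ_K hL']
      norm_num
  have hQvec : ∀ k, k ≤ K → ∃ w : HierSite L d K → ℝ,
      w ≠ 0 ∧ hierQ L d K k *ᵥ w = w ∧ hierLap L d K *ᵥ w = hierEig L K k • w := by
    intro k hk
    obtain ⟨θ, hθ⟩ : ∃ θ, hierQ L d K k θ θ ≠ 0 := by
      by_contra hcon
      push_neg at hcon
      have : (hierQ L d K k).trace = 0 :=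
        Finset.sum_eq_zero fun θ _ => hcon θ
      exact absurd this (htrpos k hk).ne'
    set w := hierQ L d K k *ᵥ Pi.single θ 1 with hw
    have hwθ : w θ = hierQ L d K k θ θ := by
      simp [hw, Matrix.mulVec, dotProduct, Pi.single_apply, mul_ite, mul_one, mul_zero]
    refine ⟨w, fun h => hθ (by rw [← hwθ, h]; rfl), ?_, ?_⟩
    · rw [hw, Matrix.mulVec_mulVec, Q_idem hL']
    · rw [hw, Matrix.mulVec_mulVec, hlapQ k hk, Matrix.smul_mulVec]
  -- the eigenspaces
  have hspace : ∀ k, k ≤ K →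
      Module.End.eigenspace (hierLap L d K).mulVecLin (hierEig L K k)
        = LinearMap.range (hierQ L d K k).mulVecLin := by
    intro k hk
    ext v
    rw [Module.End.mem_eigenspace_iff]
    constructor
    · intro hv
      have hv' : hierLap L d K *ᵥ v = hierEig L K k • v := hv
      have hsum : ∑ j ∈ Finset.range (K + 1), hierQ L d K j *ᵥ v = hierQ L d K k *ᵥ v := by
        refine Finset.sum_eq_single_of_mem k (Finset.mem_range.mpr (by omega)) ?_
        intro j hj hjk
        exact hvanish v _ hv' j (by have := Finset.mem_range.mp hj; omega)
          (eig_ne hL (Ne.symm hjk))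
      exact ⟨v, by rw [Matrix.mulVecLin_apply, ← hsum, hdecomp]⟩
    · rintro ⟨u, rfl⟩
      show hierLap L d K *ᵥ (hierQ L d K k *ᵥ u) = _
      rw [Matrix.mulVec_mulVec, hlapQ k hk, Matrix.smul_mulVec]
      rfl
  have hEK0 : hierEig L K K = 0 := by rw [hierEig, sub_self, zero_div]
  have hQK : hierQ L d K K = Pm L d K K := by
    rw [hierQ, hierP_of_gt (Nat.lt_succ_self K), sub_zero, hierP_eq le_rfl]
  have hconst : ∀ v : HierSite L d K → ℝ, Pm L d K K *ᵥ v
      = ((((L : ℝ) ^ (d * K))⁻¹ * ∑ η, v η) • (fun _ => (1 : ℝ))) := by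
    intro v
    funext θ
    have hθη : ∀ η : HierSite L d K, Pm L d K K θ η = ((L : ℝ) ^ (d * K))⁻¹ :=
      fun η => if_pos (fun i hi => absurd hi (Nat.not_le.mpr i.2))
    simp only [Matrix.mulVec, dotProduct, Pi.smul_apply, smul_eq_mul, mul_one]
    rw [Finset.sum_congr rfl (fun η _ => by rw [hθη η]), ← Finset.mul_sum]
  have hrangeK : LinearMap.range (hierQ L d K K).mulVecLin
      = Submodule.span ℝ {fun _ : HierSite L d K => (1 : ℝ)} := by
    apply le_antisymm
    · rintro x ⟨u, rfl⟩
      rw [Matrix.mulVecLin_apply, hQK, hconst]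
      exact Submodule.smul_mem _ _ (Submodule.mem_span_singleton_self _)
    · rw [Submodule.span_le, Set.singleton_subset_iff]
      refine ⟨(fun _ => (1 : ℝ)), ?_⟩
      rw [Matrix.mulVecLin_apply, hQK, hconst]
      rw [Finset.sum_const, Finset.card_univ, card_site, nsmul_eq_mul, mul_one, Nat.cast_pow,
        inv_mul_cancel₀ (pow_ne_zero _ hL0), one_smul]
  have hone : (fun _ : HierSite L d K => (1 : ℝ)) ≠ 0 := by
    intro h
    have := congrFun h (fun _ _ => ⟨0, by omega⟩)
    simpa using this
  refine ⟨?_, ?_, hEK0, ?_, ?_⟩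
  · -- spectrum
    intro μ
    constructor
    · intro h
      obtain ⟨v, hvmem, hv0⟩ :=
        (Submodule.ne_bot_iff _).mp (Module.End.hasEigenvalue_iff.mp h)
      by_contra hc
      push_neg at hc
      have hv : hierLap L d K *ᵥ v = μ • v := Module.End.mem_eigenspace_iff.mp hvmem
      have hall : ∀ j ∈ Finset.range (K + 1), hierQ L d K j *ᵥ v = 0 := fun j hj =>
        hvanish v μ hv j (by have := Finset.mem_range.mp hj; omega)
          (fun he => (hc j (by have := Finset.mem_range.mp hj; omega)) he)
      exact hv0 (by rw [← hdecomp v, Finset.sum_eq_zero hall])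
    · rintro ⟨k, hk, rfl⟩
      obtain ⟨w, hw0, -, hweig⟩ := hQvec k hk
      exact Module.End.hasEigenvalue_of_hasEigenvector
        ⟨Module.End.mem_eigenspace_iff.mpr hweig, hw0⟩
  · -- multiplicities for k < K
    intro k hkK
    have hble : L ^ (d * (K - k - 1)) ≤ L ^ (d * (K - k)) :=
      Nat.pow_le_pow_right (by omega) (Nat.mul_le_mul_left d (by omega))
    have hranktr : ((hierQ L d K k).rank : ℝ) = (hierQ L d K k).trace :=
      rank_eq_trace _ (Q_idem hL' k)
    have htrval := traceQ_lt (d := d) hL' hkK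
    have hcast : ((L ^ (d * (K - k)) - L ^ (d * (K - k - 1)) : ℕ) : ℝ)
        = (L : ℝ) ^ (d * (K - k)) - (L : ℝ) ^ (d * (K - k - 1)) := by
      rw [Nat.cast_sub hble, Nat.cast_pow, Nat.cast_pow]
    have hrank : (hierQ L d K k).rank = L ^ (d * (K - k)) - L ^ (d * (K - k - 1)) := by
      have h1 : ((hierQ L d K k).rank : ℝ)
          = ((L ^ (d * (K - k)) - L ^ (d * (K - k - 1)) : ℕ) : ℝ) := by
        rw [hranktr, htrval, hcast]
      exact_mod_cast h1
    refine ⟨?_, hrank, ?_⟩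
    · rw [hspace k hkK.le]
      exact hrank
    · obtain ⟨m, hm⟩ : ∃ m, K - k = m + 1 := ⟨K - k - 1, by omega⟩
      have hm' : K - k - 1 = m := by omega
      rw [hm', hm, Nat.mul_add, Nat.mul_one, mul_sub, mul_one, pow_add,
        mul_inv_cancel_right₀ (pow_ne_zero _ hL0)]
  · -- the zero eigenvalue is simple
    rw [← hEK0, hspace K le_rfl, hrangeK]
    exact finrank_span_singleton hone
  · rw [← hEK0, hspace K le_rfl, hrangeK]


end
end

section
/- For every continuous function f : [0, 1/(L²−1)] → ℝ, the normalized trace of f applied to the hierarchical Laplacean converges: lim_{K→∞} L^{−dK} Σ_{k=0}^{K} m_k^{(K)} f(λ_k^{(K)}) = (1 − L^{−d}) Σ_{k=0}^∞ L^{−dk} f( L^{−2k}/(L² − 1) ), where λ_k^{(K)} = (L^{−2k} − L^{−2K})/(L²−1) are the eigenvalues of −Δ on ℝ^{Λ_K} and m_k^{(K)} = L^{d(K−k)} − L^{d(K−k−1)} for k ≤ K−1, m_K^{(K)} = 1, their multiplicities. Equivalently, the empirical spectral distributions of −Δ converge weakly, as K → ∞, to the probability measure ρ = (1 − L^{−d})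 Σ_{k=0}^∞ L^{−dk} δ_{L^{−2k}/(L²−1)}. -/
open Filter Topology

/-- For every continuous `f : [0, 1/(L²−1)] → ℝ`, the normalized trace
of `f(−Δ)` converges:
`lim_{K→∞} L^{−dK} Σ_{k=0}^K m_k^{(K)} f(λ_k^{(K)})
  = (1 − L^{−d}) Σ_{k=0}^∞ L^{−dk} f(L^{−2k}/(L² − 1))`,
where `m_k^{(K)} = L^{d(K−k)} − L^{d(K−k−1)}` for `k ≤ K−1` and `m_K^{(K)} = 1` are the
multiplicities; i.e. the empirical spectral distributions of `−Δ` converge weakly to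
`ρ = (1 − L^{−d}) Σ_{k=0}^∞ L^{−dk} δ_{L^{−2k}/(L²−1)}`. -/
theorem hierarchical_empirical_spectral_limit
    (L d : ℕ) (hL : 2 ≤ L) (hd : 1 ≤ d) (f : ℝ → ℝ)
    (hf : ContinuousOn f (Set.Icc 0 (((L : ℝ) ^ 2 - 1)⁻¹))) :
    Tendsto
      (fun K : ℕ =>
        ((L : ℝ) ^ (d * K))⁻¹ *
          ((∑ k ∈ Finset.range K,
              ((L : ℝ) ^ (d * (K - k)) - (L : ℝ) ^ (d * (K - k - 1))) * f (hierEig L K k)) +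
            f (hierEig L K K)))
      atTop
      (𝓝 ((1 - ((L : ℝ) ^ d)⁻¹) *
        ∑' k : ℕ, ((L : ℝ) ^ (d * k))⁻¹ * f (((L : ℝ) ^ (2 * k))⁻¹ / ((L : ℝ) ^ 2 - 1)))) := by
  have ha : (2:ℝ) ≤ (L:ℝ) := by exact_mod_cast hL
  have ha1 : (1:ℝ) < (L:ℝ) := by linarith
  have hden : (0:ℝ) < (L:ℝ)^2 - 1 := by nlinarith
  set M : ℝ := ((L:ℝ)^2 - 1)⁻¹ with hM
  have hM0 : 0 < M := by positivity
  set r : ℝ := (((L:ℝ)^d)⁻¹ : ℝ) with hr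
  have hLd1 : (1:ℝ) < (L:ℝ)^d := one_lt_pow₀ ha1 (by omega)
  have hr0 : 0 < r := by rw [hr]; positivity
  have hr1 : r < 1 := by rw [hr]; exact inv_lt_one_of_one_lt₀ hLd1
  set c : ℕ → ℝ := fun k => ((L:ℝ)^(2*k))⁻¹ / ((L:ℝ)^2 - 1) with hc
  have hpowpos : ∀ n : ℕ, (0:ℝ) < (L:ℝ)^n := fun n => by positivity
  have hpow1 : ∀ n : ℕ, (1:ℝ) ≤ (L:ℝ)^n := fun n => one_le_pow₀ (by linarith)
  -- (L^(d*k))⁻¹ = r^k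
  have key : ∀ k : ℕ, (((L:ℝ)^(d*k))⁻¹ : ℝ) = r^k := by
    intro k; rw [hr, inv_pow, ← pow_mul]
  -- membership facts
  have hcmem : ∀ k : ℕ, c k ∈ Set.Icc 0 M := by
    intro k
    constructor
    · positivity
    · rw [hc]
      simp only
      rw [hM, div_eq_mul_inv]
      have : ((L:ℝ)^(2*k))⁻¹ ≤ 1 := inv_le_one_of_one_le₀ (hpow1 _)
      nlinarith [hM0]
  have hEmem : ∀ K k : ℕ, k ≤ K → hierEig L K k ∈ Set.Icc 0 M := by
    intro K k hk
    have hmono : ((L:ℝ)^(2*K))⁻¹ ≤ ((L:ℝ)^(2*k))⁻¹ := by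
      apply inv_anti₀ (hpowpos _)
      exact pow_le_pow_right₀ ha1.le (by omega)
    constructor
    · exact div_nonneg (by linarith) hden.le
    · rw [hierEig, hM, div_eq_mul_inv]
      have h1 : ((L:ℝ)^(2*k))⁻¹ ≤ 1 := inv_le_one_of_one_le₀ (hpow1 _)
      have h2 : (0:ℝ) < ((L:ℝ)^(2*K))⁻¹ := by positivity
      nlinarith [hM0]
  -- distance between eigenvalue and its limit
  have hdist : ∀ K k : ℕ, |hierEig L K k - c k| = ((L:ℝ)^(2*K))⁻¹ * M := by
    intro K k
    have e : hierEig L K k - c k = -(((L:ℝ)^(2*K))⁻¹ * M) := by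
      simp only [hierEig, hc, hM, sub_div, div_eq_mul_inv]
      ring
    rw [e, abs_neg, abs_of_nonneg (by positivity)]
  -- top eigenvalue is 0
  have htop : ∀ K : ℕ, hierEig L K K = 0 := by
    intro K; simp [hierEig]
  -- bound for f on the interval
  obtain ⟨C, hC⟩ := (isCompact_Icc : IsCompact (Set.Icc (0:ℝ) M)).exists_bound_of_continuousOn hf
  -- summability
  have hsum : Summable (fun k : ℕ => r^k * f (c k)) := by
    apply Summable.of_norm_bounded (g := fun k : ℕ => C * r^k)
      ((summable_geometric_of_lt_one hr0.le hr1).mul_left C)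
    intro k
    rw [norm_mul, norm_pow, Real.norm_eq_abs, Real.norm_eq_abs, abs_of_pos hr0]
    calc r^k * |f (c k)| ≤ r^k * C := by
          exact mul_le_mul_of_nonneg_left (hC _ (hcmem k)) (by positivity)
      _ = C * r^k := mul_comm _ _
  -- the three pieces
  set B : ℕ → ℝ := fun K => ∑ k ∈ Finset.range K, (1 - r) * r^k * (f (hierEig L K k) - f (c k))
    with hB
  set Cc : ℕ → ℝ := fun K => (1 - r) * ∑ k ∈ Finset.range K, r^k * f (c k) with hCc
  -- rewrite the given expression
  have heq : ∀ K : ℕ,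
      ((L : ℝ) ^ (d * K))⁻¹ *
          ((∑ k ∈ Finset.range K,
              ((L : ℝ) ^ (d * (K - k)) - (L : ℝ) ^ (d * (K - k - 1))) * f (hierEig L K k)) +
            f (hierEig L K K))
      = B K + Cc K + r^K * f 0 := by
    intro K
    rw [mul_add, Finset.mul_sum]
    have hterm : ∀ k ∈ Finset.range K,
        ((L : ℝ) ^ (d * K))⁻¹ *
          (((L : ℝ) ^ (d * (K - k)) - (L : ℝ) ^ (d * (K - k - 1))) * f (hierEig L K k))
        = (1 - r) * r^k * (f (hierEig L K k) - f (c k)) + (1 - r) * (r^k * f (c k)) := by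
      intro k hk
      rw [Finset.mem_range] at hk
      have e1 : ((L:ℝ)^(d*K))⁻¹ * (L:ℝ)^(d*(K-k)) = ((L:ℝ)^(d*k))⁻¹ := by
        have hadd : (L:ℝ)^(d*(K-k)) * (L:ℝ)^(d*k) = (L:ℝ)^(d*K) := by
          rw [← pow_add, ← Nat.mul_add, Nat.sub_add_cancel hk.le]
        field_simp
        linarith [hadd]
      have e2 : ((L:ℝ)^(d*K))⁻¹ * (L:ℝ)^(d*(K-k-1)) = ((L:ℝ)^(d*(k+1)))⁻¹ := by
        have hadd : (L:ℝ)^(d*(K-k-1)) * (L:ℝ)^(d*(k+1)) = (L:ℝ)^(d*K) := by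
          rw [← pow_add, ← Nat.mul_add]
          have h9 : K - k - 1 + (k + 1) = K := by omega
          rw [h9]
        field_simp
        linarith [hadd]
      have e3 : ((L:ℝ)^(d*K))⁻¹ * (((L:ℝ)^(d*(K-k)) - (L:ℝ)^(d*(K-k-1))) * f (hierEig L K k))
          = (((L:ℝ)^(d*k))⁻¹ - ((L:ℝ)^(d*(k+1)))⁻¹) * f (hierEig L K k) := by
        rw [← e1, ← e2]; ring
      rw [e3, key k, key (k+1)]
      ring
    rw [Finset.sum_congr rfl hterm, Finset.sum_add_distrib, htop K, key K,
      ← Finset.mul_sum]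
  -- limits of the pieces
  have hBlim : Tendsto B atTop (𝓝 0) := by
    rw [Metric.tendsto_atTop]
    intro ε hε
    have huc := (isCompact_Icc : IsCompact (Set.Icc (0:ℝ) M)).uniformContinuousOn_of_continuous hf
    rw [Metric.uniformContinuousOn_iff] at huc
    obtain ⟨δ, hδ0, hδ⟩ := huc (ε/2) (by linarith)
    -- choose N
    have htend : Tendsto (fun K : ℕ => ((L:ℝ)^(2*K))⁻¹ * M) atTop (𝓝 0) := by
      have h1 : Tendsto (fun K : ℕ => (((L:ℝ)^2)⁻¹)^K) atTop (𝓝 0) := by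
        apply tendsto_pow_atTop_nhds_zero_of_lt_one (by positivity)
        rw [inv_lt_one_iff₀]
        right; nlinarith
      have h2 := h1.mul_const M
      rw [zero_mul] at h2
      convert h2 using 2 with K
      rw [inv_pow, ← pow_mul, Nat.mul_comm]
    obtain ⟨N, hN⟩ := (htend.eventually_lt_const hδ0).exists
    refine ⟨N, fun K hK => ?_⟩
    have hsmall : ((L:ℝ)^(2*K))⁻¹ * M < δ := by
      calc ((L:ℝ)^(2*K))⁻¹ * M ≤ ((L:ℝ)^(2*N))⁻¹ * M := by
            apply mul_le_mul_of_nonneg_right _ hM0.le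
            apply inv_anti₀ (hpowpos _)
            exact pow_le_pow_right₀ ha1.le (by omega)
        _ < δ := hN
    have hbound : ∀ k ∈ Finset.range K,
        |(1 - r) * r^k * (f (hierEig L K k) - f (c k))| ≤ (1 - r) * r^k * (ε/2) := by
      intro k hk
      rw [Finset.mem_range] at hk
      have h9 : (0:ℝ) ≤ (1-r)*r^k := mul_nonneg (by linarith) (by positivity)
      rw [abs_mul, abs_of_nonneg h9]
      apply mul_le_mul_of_nonneg_left _ h9
      have := hδ _ (hEmem K k hk.le) _ (hcmem k) (by rw [Real.dist_eq, hdist]; exact hsmall)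
      rw [Real.dist_eq] at this
      exact this.le
    rw [Real.dist_eq, sub_zero]
    calc |B K| ≤ ∑ k ∈ Finset.range K, |(1 - r) * r^k * (f (hierEig L K k) - f (c k))| :=
          Finset.abs_sum_le_sum_abs _ _
      _ ≤ ∑ k ∈ Finset.range K, (1 - r) * r^k * (ε/2) := Finset.sum_le_sum hbound
      _ = (1 - r) * (ε/2) * ∑ k ∈ Finset.range K, r^k := by
          rw [Finset.mul_sum]; apply Finset.sum_congr rfl; intro k _; ring
      _ ≤ (1 - r) * (ε/2) * (1 - r)⁻¹ := by
          apply mul_le_mul_of_nonneg_left _ (mul_nonneg (by linarith) (by linarith))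
          have := Summable.sum_le_tsum (Finset.range K) (fun k _ => by positivity)
            (summable_geometric_of_lt_one hr0.le hr1)
          rwa [tsum_geometric_of_lt_one hr0.le hr1] at this
      _ = ε/2 := by
          rw [mul_right_comm, mul_inv_cancel₀ (by linarith : (1:ℝ) - r ≠ 0), one_mul]
      _ < ε := by linarith
  have hClim : Tendsto Cc atTop (𝓝 ((1 - r) * ∑' k : ℕ, r^k * f (c k))) :=
    (hsum.hasSum.tendsto_sum_nat).const_mul (1 - r)
  have hPlim : Tendsto (fun K : ℕ => r^K * f 0) atTop (𝓝 0) := by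
    have := (tendsto_pow_atTop_nhds_zero_of_lt_one hr0.le hr1).mul_const (f 0)
    rwa [zero_mul] at this
  have hfinal := (hBlim.add hClim).add hPlim
  rw [zero_add, add_zero] at hfinal
  have hcongr : (fun K : ℕ => B K + Cc K + r^K * f 0) =
      (fun K : ℕ =>
        ((L : ℝ) ^ (d * K))⁻¹ *
          ((∑ k ∈ Finset.range K,
              ((L : ℝ) ^ (d * (K - k)) - (L : ℝ) ^ (d * (K - k - 1))) * f (hierEig L K k)) +
            f (hierEig L K K))) := by
    funext K; rw [heq K]
  rw [hcongr] at hfinal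
  have hts : ((1 : ℝ) - r) *
      (∑' k : ℕ, ((L:ℝ)^(d*k))⁻¹ * f (((L:ℝ)^(2*k))⁻¹/((L:ℝ)^2-1)))
      = (1 - r) * ∑' k : ℕ, r^k * f (c k) := by
    congr 1
    exact tsum_congr fun k => by rw [key k]
  rw [hts]
  exact hfinal
end

section
/- For every μ < 0, lim_{K→∞} L^{−dK} ln det( −Δ_K − μ I ) = (1 − L^{−d}) Σ_{k=0}^∞ L^{−dk} ln( L^{−2k}/(L² − 1) − μ ), where −Δ_K is the hierarchical Laplacean on ℝ^{Λ_K} (a matrix of order L^{dK}); note −Δ_K − μI is positive definite so the determinant is positive and the series converges absolutely. -/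
open Filter Topology

open Matrix

noncomputable section

lemma sum_ite_mul_ite {ι : Type*} [Fintype ι] [DecidableEq ι] (a b : ι) (s t : ℝ) :
    (∑ τ : ι, (if a = τ then s else 0) * (if b = τ then t else 0))
      = if a = b then s * t else 0 := by
  have h : ∀ τ, (if a = τ then s else 0) * (if b = τ then t else 0)
      = if a = τ then (if b = τ then s * t else 0) else 0 := by
    intro τ; split_ifs <;> simp
  rw [Finset.sum_congr rfl fun τ _ => h τ, Finset.sum_ite_eq]
  simp [eq_comm]

/-- Explicit form of the projection. -/
def Pmat (L d K k : ℕ) : Matrix (HierSite L d K) (HierSite L d K) ℝ :=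
  fun θ θ' => if ∀ i : Fin K, k ≤ (i : ℕ) → θ i = θ' i then ((L : ℝ) ^ (d * k))⁻¹ else 0

lemma Pmat_zero (L d K : ℕ) : Pmat L d K 0 = 1 := by
  ext θ θ'
  simp only [Pmat, Nat.mul_zero, pow_zero, inv_one, Matrix.one_apply]
  congr 1
  simp [funext_iff]

lemma hierP_eq (L d : ℕ) {K k : ℕ} (hk : k ≤ K) :
    hierP L d K k = Pmat L d K k := by
  ext θ θ'
  rw [hierP, dif_pos hk]
  simp only [Matrix.reindex_apply, Matrix.submatrix_apply, Matrix.mul_apply,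
    Matrix.transpose_apply, hierB, Equiv.arrowCongr_symm, Equiv.arrowCongr_apply,
    Equiv.refl_symm, Equiv.refl_apply, Function.comp, finCongr_symm, finCongr_apply]
  rw [sum_ite_mul_ite]
  have hs : Real.sqrt ((L : ℝ) ^ (d * k)) * Real.sqrt ((L : ℝ) ^ (d * k))
      = (L : ℝ) ^ (d * k) := Real.mul_self_sqrt (by positivity)
  have hcond : ((fun i : Fin (K - k) => θ (Fin.cast (Nat.add_sub_cancel' hk) (Fin.natAdd k i)))
      = fun i : Fin (K - k) => θ' (Fin.cast (Nat.add_sub_cancel' hk) (Fin.natAdd k i)))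
      ↔ ∀ i : Fin K, k ≤ (i : ℕ) → θ i = θ' i := by
    constructor
    · intro h i hi
      have hj : (i : ℕ) - k < K - k := by omega
      have := congrFun h ⟨(i : ℕ) - k, hj⟩
      simpa only [Fin.cast, Fin.natAdd] using by
        convert this using 3 <;> · ext; simp; omega
    · intro h
      funext j
      exact h _ (by simp [Fin.cast, Fin.natAdd])
  rw [Pmat]
  by_cases hc : ∀ i : Fin K, k ≤ (i : ℕ) → θ i = θ' i
  · rw [if_pos (hcond.mpr hc), if_pos hc, ← mul_inv, hs]
  · rw [if_neg (fun h => hc (hcond.mp h)), if_neg hc]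

lemma sum_ite_mul_ite' {ι : Type*} [Fintype ι] [DecidableEq ι] (a b : ι) (s t : ℝ) :
    (∑ τ : ι, (if τ = a then s else 0) * (if τ = b then t else 0))
      = if a = b then s * t else 0 := by
  have h : ∀ τ, (if τ = a then s else 0) * (if τ = b then t else 0)
      = if a = τ then (if b = τ then s * t else 0) else 0 := by
    intro τ
    by_cases h1 : τ = a
    · subst h1
      rw [if_pos rfl, if_pos rfl]
      by_cases h2 : τ = b
      · rw [if_pos h2, if_pos h2.symm]
      · rw [if_neg h2, if_neg (fun h => h2 h.symm), mul_zero]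
    · rw [if_neg h1, zero_mul, if_neg (fun h : a = τ => h1 h.symm)]
  rw [Finset.sum_congr rfl fun τ _ => h τ, Finset.sum_ite_eq]
  simp [eq_comm]

def Bmat (L d n : ℕ) : Matrix (HierSite L d n) (HierSite L d (n + 1)) ℝ :=
  fun τ θ => if (fun i : Fin n => θ i.succ) = τ then (Real.sqrt ((L : ℝ) ^ d))⁻¹ else 0

lemma sqrt_inv_sq (L d : ℕ) :
    (Real.sqrt ((L : ℝ) ^ d))⁻¹ * (Real.sqrt ((L : ℝ) ^ d))⁻¹ = ((L : ℝ) ^ d)⁻¹ := by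
  rw [← mul_inv, Real.mul_self_sqrt (by positivity)]

lemma Bmat_mul_transpose (L d n : ℕ) (hL : 1 ≤ L) :
    Bmat L d n * (Bmat L d n)ᵀ = 1 := by
  ext τ τ'
  simp only [Matrix.mul_apply, Matrix.transpose_apply, Bmat]
  rw [← (Fin.consEquiv (fun _ : Fin (n + 1) => HierDigit L d)).sum_comp
    (fun θ => (if (fun i : Fin n => θ i.succ) = τ then (Real.sqrt ((L : ℝ) ^ d))⁻¹ else 0) *
      (if (fun i : Fin n => θ i.succ) = τ' then (Real.sqrt ((L : ℝ) ^ d))⁻¹ else 0))]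
  rw [Fintype.sum_prod_type]
  have e : ∀ p : HierDigit L d × HierSite L d n,
      (fun i : Fin n => (Fin.consEquiv (fun _ : Fin (n + 1) => HierDigit L d) p) i.succ)
        = p.2 := by
    intro p; funext i; simp [Fin.consEquiv]
  simp only [e]
  rw [Finset.sum_congr rfl (fun x _ => sum_ite_mul_ite' τ τ' _ _)]
  rw [Finset.sum_const, sqrt_inv_sq]
  have hcard : (Finset.univ : Finset (HierDigit L d)).card = L ^ d := by
    simp [Fintype.card_fun]
  rw [hcard, Matrix.one_apply]
  have hLd : ((L : ℝ) ^ d) ≠ 0 := by positivity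
  split_ifs <;> simp [hLd]

lemma conj_Pmat (L d n j : ℕ) :
    (Bmat L d n)ᵀ * Pmat L d n j * Bmat L d n = Pmat L d (n + 1) (j + 1) := by
  ext θ θ'
  simp only [Matrix.mul_apply, Matrix.transpose_apply, Bmat, Pmat, Finset.sum_mul]
  -- collapse the double sum
  have step : ∀ τ' : HierSite L d n,
      (∑ τ : HierSite L d n,
        (if (fun i : Fin n => θ i.succ) = τ then (Real.sqrt ((L : ℝ) ^ d))⁻¹ else 0) *
          (if ∀ i : Fin n, j ≤ (i : ℕ) → τ i = τ' i then ((L : ℝ) ^ (d * j))⁻¹ else 0) *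
          (if (fun i : Fin n => θ' i.succ) = τ' then (Real.sqrt ((L : ℝ) ^ d))⁻¹ else 0))
      = (if ∀ i : Fin n, j ≤ (i : ℕ) → θ i.succ = τ' i then
          (Real.sqrt ((L : ℝ) ^ d))⁻¹ * ((L : ℝ) ^ (d * j))⁻¹ else 0) *
          (if (fun i : Fin n => θ' i.succ) = τ' then (Real.sqrt ((L : ℝ) ^ d))⁻¹ else 0) := by
    intro τ'
    rw [← Finset.sum_mul]
    congr 1
    rw [Finset.sum_eq_single (fun i : Fin n => θ i.succ)]
    · simp
    · intro τ _ hτ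
      rw [if_neg (fun h => hτ h.symm), zero_mul]
    · simp
  rw [Finset.sum_congr rfl fun τ' _ => step τ']
  rw [Finset.sum_eq_single (fun i : Fin n => θ' i.succ)]
  · have hcond : (∀ i : Fin n, j ≤ (i : ℕ) → θ i.succ = θ' i.succ)
        ↔ ∀ i : Fin (n + 1), j + 1 ≤ (i : ℕ) → θ i = θ' i := by
      constructor
      · intro h i hi
        rcases Fin.eq_succ_of_ne_zero (i := i) (by
          rintro rfl; simp at hi) with ⟨m, rfl⟩
        simp only [Fin.val_succ] at hi
        exact h m (by omega)
      · intro h i hi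
        exact h i.succ (by simp only [Fin.val_succ]; omega)
    have hval : (Real.sqrt ((L : ℝ) ^ d))⁻¹ * ((L : ℝ) ^ (d * j))⁻¹ * (Real.sqrt ((L : ℝ) ^ d))⁻¹
        = ((L : ℝ) ^ (d * (j + 1)))⁻¹ := by
      rw [mul_right_comm, sqrt_inv_sq, ← mul_inv, ← pow_add]
      ring_nf
    by_cases hc : ∀ i : Fin n, j ≤ (i : ℕ) → θ i.succ = θ' i.succ
    · rw [if_pos hc, if_pos rfl, if_pos (hcond.mp hc), hval]
    · rw [if_neg hc, zero_mul, if_neg (fun h => hc (hcond.mpr h))]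
  · intro τ' _ hτ'
    exact mul_eq_zero_of_right _ (if_neg fun h => hτ' h.symm)
  · simp



/-- `Σ_{k=1}^K L^{−2k}`. -/
def sgeo (L K : ℕ) : ℝ := ∑ j ∈ Finset.range K, ((L : ℝ) ^ (2 * (j + 1)))⁻¹

lemma sgeo_succ (L n : ℕ) :
    sgeo L (n + 1) = ((L : ℝ) ^ 2)⁻¹ * sgeo L n + ((L : ℝ) ^ 2)⁻¹ := by
  rw [sgeo, Finset.sum_range_succ', sgeo, Finset.mul_sum]
  refine congrArg₂ (· + ·) (Finset.sum_congr rfl fun j _ => ?_) (by norm_num)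
  rw [← mul_inv, ← pow_add]
  congr 2
  ring

lemma sgeo_nonneg (L K : ℕ) : 0 ≤ sgeo L K :=
  Finset.sum_nonneg fun j _ => by positivity

lemma hierLap_range (L d K : ℕ) :
    hierLap L d K
      = ∑ j ∈ Finset.range K,
          ((L : ℝ) ^ (2 * (j + 1)))⁻¹ • ((1 : Matrix _ _ ℝ) - Pmat L d K (j + 1)) := by
  rw [hierLap, ← Finset.Ico_add_one_right_eq_Icc, Finset.sum_Ico_eq_sum_range]
  refine Finset.sum_congr rfl fun j hj => ?_
  have hj' := Finset.mem_range.mp hj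
  rw [hierP_eq L d (show 1 + j ≤ K by omega), add_comm 1 j]

lemma hierLap_split (L d K : ℕ) :
    hierLap L d K
      = sgeo L K • (1 : Matrix (HierSite L d K) (HierSite L d K) ℝ)
        - ∑ j ∈ Finset.range K, ((L : ℝ) ^ (2 * (j + 1)))⁻¹ • Pmat L d K (j + 1) := by
  rw [hierLap_range]
  rw [Finset.sum_congr rfl fun (j : ℕ) _ =>
    smul_sub (((L : ℝ) ^ (2 * (j + 1)))⁻¹)
      (1 : Matrix (HierSite L d K) (HierSite L d K) ℝ) (Pmat L d K (j + 1))]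
  rw [Finset.sum_sub_distrib, ← Finset.sum_smul, sgeo]

/-- The middle matrix in the recursion step. -/
def Cmat (L d n : ℕ) : Matrix (HierSite L d n) (HierSite L d n) ℝ :=
  ∑ j ∈ Finset.range (n + 1), ((L : ℝ) ^ (2 * (j + 1)))⁻¹ • Pmat L d n j

lemma lap_sub_eq (L d n : ℕ) (μ : ℝ) :
    hierLap L d (n + 1) - μ • (1 : Matrix _ _ ℝ)
      = (sgeo L (n + 1) - μ) • (1 : Matrix _ _ ℝ)
        - (Bmat L d n)ᵀ * Cmat L d n * Bmat L d n := by
  have hBCB : (Bmat L d n)ᵀ * Cmat L d n * Bmat L d n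
      = ∑ j ∈ Finset.range (n + 1),
          ((L : ℝ) ^ (2 * (j + 1)))⁻¹ • Pmat L d (n + 1) (j + 1) := by
    rw [Cmat, Matrix.mul_sum, Matrix.sum_mul]
    refine Finset.sum_congr rfl fun j _ => ?_
    rw [Matrix.mul_smul, Matrix.smul_mul, conj_Pmat]
  rw [hBCB, hierLap_split, sub_smul]
  abel

lemma alpha_one_sub_C (L d n : ℕ) (hL : 1 ≤ L) (μ : ℝ) :
    (sgeo L (n + 1) - μ) • (1 : Matrix (HierSite L d n) (HierSite L d n) ℝ) - Cmat L d n
      = ((L : ℝ) ^ 2)⁻¹ • (hierLap L d n - ((L : ℝ) ^ 2 * μ) • (1 : Matrix _ _ ℝ)) := by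
  have hL0 : ((L : ℝ) ^ 2) ≠ 0 := by
    have : (0 : ℝ) < L := by exact_mod_cast Nat.lt_of_lt_of_le Nat.zero_lt_one hL
    positivity
  have hC : Cmat L d n
      = ((L : ℝ) ^ 2)⁻¹ • (1 : Matrix (HierSite L d n) (HierSite L d n) ℝ)
        + ((L : ℝ) ^ 2)⁻¹ •
            ∑ j ∈ Finset.range n, ((L : ℝ) ^ (2 * (j + 1)))⁻¹ • Pmat L d n (j + 1) := by
    rw [Cmat, Finset.sum_range_succ', Pmat_zero, Finset.smul_sum, add_comm]
    refine congrArg₂ (· + ·) (by norm_num) (Finset.sum_congr rfl fun j _ => ?_)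
    rw [smul_smul, ← mul_inv, ← pow_add]
    congr 2
    ring
  rw [hC, hierLap_split, sgeo_succ]
  generalize (∑ j ∈ Finset.range n, ((L : ℝ) ^ (2 * (j + 1)))⁻¹ • Pmat L d n (j + 1)) = X
  rw [smul_sub, smul_sub, smul_smul, smul_smul, inv_mul_cancel_left₀ hL0]
  module


lemma card_site (L d K : ℕ) : Fintype.card (HierSite L d K) = L ^ (d * K) := by
  simp only [Fintype.card_fun, Fintype.card_fin]
  rw [← pow_mul, mul_comm d K]

lemma smul_one_sub_eq (α : ℝ) (hα : α ≠ 0) {m : Type*} [Fintype m] [DecidableEq m]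
    (M : Matrix m m ℝ) :
    α • (1 : Matrix m m ℝ) - M = α • ((1 : Matrix m m ℝ) + (-α⁻¹) • M) := by
  rw [smul_add, smul_smul, mul_neg, mul_inv_cancel₀ hα, neg_one_smul]
  abel

lemma det_step (L d n : ℕ) (hL : 1 ≤ L) (μ : ℝ) (hα : sgeo L (n + 1) - μ ≠ 0) :
    (hierLap L d (n + 1) - μ • (1 : Matrix _ _ ℝ)).det
      = (sgeo L (n + 1) - μ) ^ (L ^ (d * (n + 1)) - L ^ (d * n))
          * (((L : ℝ) ^ 2)⁻¹) ^ (L ^ (d * n))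
          * (hierLap L d n - ((L : ℝ) ^ 2 * μ) • (1 : Matrix _ _ ℝ)).det := by
  set α := sgeo L (n + 1) - μ with hαdef
  set B := Bmat L d n
  set C := Cmat L d n
  have h1 : hierLap L d (n + 1) - μ • (1 : Matrix _ _ ℝ) = α • 1 - Bᵀ * C * B :=
    lap_sub_eq L d n μ
  have hBCB : Bᵀ * C * B = Bᵀ * (C * B) := by rw [Matrix.mul_assoc]
  have key1 : α • (1 : Matrix (HierSite L d (n + 1)) (HierSite L d (n + 1)) ℝ) - Bᵀ * C * B
      = α • ((1 : Matrix _ _ ℝ) + Bᵀ * ((-α⁻¹) • (C * B))) := by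
    rw [Matrix.mul_smul, ← hBCB, smul_one_sub_eq α hα]
  have hswap : ((-α⁻¹) • (C * B)) * Bᵀ = (-α⁻¹) • C := by
    rw [Matrix.smul_mul, Matrix.mul_assoc, Bmat_mul_transpose L d n hL, Matrix.mul_one]
  have key2 : (α • ((1 : Matrix (HierSite L d n) (HierSite L d n) ℝ) + (-α⁻¹) • C)).det
      = (((L : ℝ) ^ 2)⁻¹) ^ (L ^ (d * n))
          * (hierLap L d n - ((L : ℝ) ^ 2 * μ) • (1 : Matrix _ _ ℝ)).det := by
    rw [← smul_one_sub_eq α hα, alpha_one_sub_C L d n hL μ, Matrix.det_smul, card_site]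
  have hmono : L ^ (d * n) ≤ L ^ (d * (n + 1)) :=
    Nat.pow_le_pow_right (by omega) (by nlinarith)
  calc (hierLap L d (n + 1) - μ • (1 : Matrix _ _ ℝ)).det
      = (α • ((1 : Matrix _ _ ℝ) + Bᵀ * ((-α⁻¹) • (C * B)))).det := by rw [h1, key1]
    _ = α ^ (L ^ (d * (n + 1)))
          * ((1 : Matrix (HierSite L d n) (HierSite L d n) ℝ) + (-α⁻¹) • C).det := by
        rw [Matrix.det_smul, card_site, Matrix.det_one_add_mul_comm, hswap]
    _ = α ^ (L ^ (d * (n + 1)) - L ^ (d * n))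
          * (α ^ (L ^ (d * n)) * ((1 : Matrix _ _ ℝ) + (-α⁻¹) • C).det) := by
        rw [← mul_assoc, ← pow_add, Nat.sub_add_cancel hmono]
    _ = α ^ (L ^ (d * (n + 1)) - L ^ (d * n))
          * (((L : ℝ) ^ 2)⁻¹) ^ (L ^ (d * n))
          * (hierLap L d n - ((L : ℝ) ^ 2 * μ) • (1 : Matrix _ _ ℝ)).det := by
        rw [show α ^ L ^ (d * n)
              * ((1 : Matrix (HierSite L d n) (HierSite L d n) ℝ) + (-α⁻¹) • C).det
            = (α • ((1 : Matrix (HierSite L d n) (HierSite L d n) ℝ) + (-α⁻¹) • C)).det from by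
          rw [Matrix.det_smul, card_site], key2, ← mul_assoc]


/-- Eigenvalue `λ_j^{(K)} = Σ_{k=j+1}^K L^{−2k}`. -/
def lamN (L K j : ℕ) : ℝ := (((L : ℝ) ^ 2)⁻¹) ^ j * sgeo L (K - j)

/-- Multiplicity `L^{d(K−j)} − L^{d(K−j−1)}`. -/
def mExp (L d K j : ℕ) : ℕ := L ^ (d * (K - j)) - L ^ (d * (K - j - 1))

lemma lamN_zero (L K : ℕ) : lamN L K 0 = sgeo L K := by
  simp [lamN]

lemma lamN_succ (L n j : ℕ) :
    lamN L (n + 1) (j + 1) = ((L : ℝ) ^ 2)⁻¹ * lamN L n j := by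
  rw [lamN, lamN, pow_succ, Nat.succ_sub_succ]
  ring

lemma lamN_nonneg (L K j : ℕ) : 0 ≤ lamN L K j := by
  have := sgeo_nonneg L (K - j)
  rw [lamN]; positivity

lemma mExp_zero (L d n : ℕ) : mExp L d (n + 1) 0 = L ^ (d * (n + 1)) - L ^ (d * n) := by
  simp [mExp]

lemma mExp_succ (L d n j : ℕ) : mExp L d (n + 1) (j + 1) = mExp L d n j := by
  simp [mExp, Nat.succ_sub_succ]

lemma sum_mExp (L d : ℕ) (hL : 1 ≤ L) :
    ∀ K : ℕ, ∑ j ∈ Finset.range K, mExp L d K j = L ^ (d * K) - 1 := by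
  intro K
  induction K with
  | zero => simp
  | succ n ih =>
    rw [Finset.sum_range_succ']
    simp only [mExp_succ, mExp_zero, ih]
    have h1 : 1 ≤ L ^ (d * n) := Nat.one_le_pow _ _ (by omega)
    have h2 : L ^ (d * n) ≤ L ^ (d * (n + 1)) :=
      Nat.pow_le_pow_right (by omega) (by nlinarith)
    omega

lemma det_base (L d : ℕ) (μ : ℝ) :
    (hierLap L d 0 - μ • (1 : Matrix _ _ ℝ)).det = -μ := by
  have h0 : hierLap L d 0 = 0 := by simp [hierLap]
  rw [h0, zero_sub, ← neg_smul, Matrix.det_smul, card_site, Matrix.det_one]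
  norm_num

lemma det_formula (L d : ℕ) (hL : 1 ≤ L) :
    ∀ K : ℕ, ∀ μ : ℝ, μ < 0 →
      (hierLap L d K - μ • (1 : Matrix _ _ ℝ)).det
        = (-μ) * ∏ j ∈ Finset.range K, (lamN L K j - μ) ^ mExp L d K j := by
  intro K
  induction K with
  | zero => intro μ hμ; simpa using det_base L d μ
  | succ n ih =>
    intro μ hμ
    have hLpos : (0 : ℝ) < L := by exact_mod_cast Nat.lt_of_lt_of_le Nat.zero_lt_one hL
    have hL0 : ((L : ℝ) ^ 2) ≠ 0 := by positivity
    have hα : sgeo L (n + 1) - μ ≠ 0 :=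
      ne_of_gt (by have := sgeo_nonneg L (n + 1); linarith)
    have hμ' : (L : ℝ) ^ 2 * μ < 0 := mul_neg_of_pos_of_neg (by positivity) hμ
    rw [det_step L d n hL μ hα, ih ((L : ℝ) ^ 2 * μ) hμ']
    rw [Finset.prod_range_succ']
    have hf0 : (lamN L (n + 1) 0 - μ) ^ mExp L d (n + 1) 0
        = (sgeo L (n + 1) - μ) ^ (L ^ (d * (n + 1)) - L ^ (d * n)) := by
      rw [lamN_zero, mExp_zero]
    have hN1 : 1 ≤ L ^ (d * n) := Nat.one_le_pow _ _ (by omega)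
    have hprod : (∏ j ∈ Finset.range n, (lamN L (n + 1) (j + 1) - μ) ^ mExp L d (n + 1) (j + 1))
        = (((L : ℝ) ^ 2)⁻¹) ^ (L ^ (d * n) - 1)
          * ∏ j ∈ Finset.range n, (lamN L n j - (L : ℝ) ^ 2 * μ) ^ mExp L d n j := by
      rw [← sum_mExp L d hL n, ← Finset.prod_pow_eq_pow_sum, ← Finset.prod_mul_distrib]
      refine Finset.prod_congr rfl fun j _ => ?_
      rw [mExp_succ, ← mul_pow]
      congr 1
      rw [lamN_succ]
      field_simp
    rw [hf0, hprod]
    have hpow : (((L : ℝ) ^ 2)⁻¹) ^ (L ^ (d * n))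
        = (((L : ℝ) ^ 2)⁻¹) ^ (L ^ (d * n) - 1) * ((L : ℝ) ^ 2)⁻¹ := by
      rw [← pow_succ]
      congr 1
      omega
    rw [hpow]
    field_simp


/-- The limiting eigenvalue `λ_j^{(∞)} = L^{−2j}/(L²−1)`. -/
def lamInf (L j : ℕ) : ℝ := ((L : ℝ) ^ (2 * j))⁻¹ / ((L : ℝ) ^ 2 - 1)

section Analysis

variable {L : ℕ}

lemma hL2R (hL : 2 ≤ L) : (2 : ℝ) ≤ (L : ℝ) := by exact_mod_cast hL
lemma hLposR (hL : 2 ≤ L) : (0 : ℝ) < (L : ℝ) := lt_of_lt_of_le two_pos (hL2R hL)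
lemma hden_pos (hL : 2 ≤ L) : (0 : ℝ) < (L : ℝ) ^ 2 - 1 := by nlinarith [hL2R hL]

lemma lamInf_pos (hL : 2 ≤ L) (j : ℕ) : 0 < lamInf L j := by
  have h1 := hLposR hL
  have h2 := hden_pos hL
  rw [lamInf]; positivity

lemma lamInf_eq_pow (j : ℕ) : lamInf L j = (((L : ℝ) ^ 2)⁻¹) ^ j * lamInf L 0 := by
  rw [lamInf, lamInf, pow_mul, ← inv_pow]
  norm_num
  ring

lemma lamInf_le (hL : 2 ≤ L) (j : ℕ) : lamInf L j ≤ lamInf L 0 := by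
  have h2 := hL2R hL
  have h0 : 0 < lamInf L 0 := lamInf_pos hL 0
  have hx : (((L : ℝ) ^ 2)⁻¹) ^ j ≤ 1 := by
    apply pow_le_one₀ (by positivity)
    rw [inv_le_one_iff₀]
    right
    nlinarith
  rw [lamInf_eq_pow j]
  nlinarith

lemma sgeo_closed (hL : 2 ≤ L) (m : ℕ) :
    sgeo L m = (1 - (((L : ℝ) ^ 2)⁻¹) ^ m) / ((L : ℝ) ^ 2 - 1) := by
  have h1 := hden_pos hL
  have h2 : ((L : ℝ) ^ 2) ≠ 0 := by have := hLposR hL; positivity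
  induction m with
  | zero => simp [sgeo]
  | succ n ih =>
    have hx : ((L : ℝ) ^ 2)⁻¹ * (L : ℝ) ^ 2 = 1 := inv_mul_cancel₀ h2
    rw [sgeo_succ, ih, ← mul_div_assoc, div_add' _ _ _ (ne_of_gt h1),
      div_eq_div_iff (ne_of_gt h1) (ne_of_gt h1), pow_succ]
    linear_combination ((L : ℝ) ^ 2 - 1) * hx

lemma lamN_eq (hL : 2 ≤ L) {j K : ℕ} (hj : j ≤ K) :
    lamN L K j = lamInf L j - lamInf L K := by
  obtain ⟨m, rfl⟩ : ∃ m, K = j + m := ⟨K - j, by omega⟩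
  have h1 := hden_pos hL
  have h2 : ((L : ℝ) ^ 2) ≠ 0 := by have := hLposR hL; positivity
  rw [lamN, sgeo_closed hL, Nat.add_sub_cancel_left, lamInf, lamInf, pow_mul, pow_mul,
    ← inv_pow, ← inv_pow, pow_add]
  ring

lemma lamN_le (hL : 2 ≤ L) {j K : ℕ} (hj : j ≤ K) : lamN L K j ≤ lamInf L j := by
  rw [lamN_eq hL hj]
  have := lamInf_pos hL K
  linarith

end Analysis


lemma coef_eq (L d : ℕ) (hL : 2 ≤ L) {j K : ℕ} (hj : j < K) :
    ((L : ℝ) ^ (d * K))⁻¹ * (mExp L d K j : ℝ)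
      = (1 - ((L : ℝ) ^ d)⁻¹) * ((L : ℝ) ^ (d * j))⁻¹ := by
  obtain ⟨m, rfl⟩ : ∃ m, K = m + 1 + j := ⟨K - j - 1, by omega⟩
  have hLp := hLposR hL
  have hy : (0 : ℝ) < (L : ℝ) ^ d := by positivity
  have hy' : ((L : ℝ) ^ d) ≠ 0 := ne_of_gt hy
  have hsub : mExp L d (m + 1 + j) j = L ^ (d * (m + 1)) - L ^ (d * m) := by
    rw [mExp, show m + 1 + j - j = m + 1 from by omega, show m + 1 - 1 = m from by omega]
  rw [hsub, Nat.cast_sub (Nat.pow_le_pow_right (by omega)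
    (Nat.mul_le_mul_left d (by omega)))]
  push_cast
  rw [pow_mul, pow_mul, pow_mul]
  field_simp
  ring

lemma log_det_eq (L d : ℕ) (hL : 2 ≤ L) (μ : ℝ) (hμ : μ < 0) (K : ℕ) :
    ((L : ℝ) ^ (d * K))⁻¹ * Real.log ((hierLap L d K - μ • (1 : Matrix _ _ ℝ)).det)
      = ((L : ℝ) ^ (d * K))⁻¹ * Real.log (-μ)
        + (1 - ((L : ℝ) ^ d)⁻¹) *
            ∑ j ∈ Finset.range K, ((L : ℝ) ^ (d * j))⁻¹ * Real.log (lamN L K j - μ) := by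
  have hL1 : 1 ≤ L := by omega
  have hfac : ∀ j, (0 : ℝ) < lamN L K j - μ := fun j => by
    have := lamN_nonneg L K j; linarith
  rw [det_formula L d hL1 K μ hμ,
    Real.log_mul (by linarith) (Finset.prod_ne_zero_iff.mpr fun j _ =>
      pow_ne_zero _ (ne_of_gt (hfac j))),
    Real.log_prod (fun j _ => pow_ne_zero _ (ne_of_gt (hfac j)))]
  simp only [Real.log_pow]
  rw [mul_add, Finset.mul_sum, Finset.mul_sum]
  congr 1
  refine Finset.sum_congr rfl fun j hj => ?_
  rw [← mul_assoc, coef_eq L d hL (Finset.mem_range.mp hj), mul_assoc]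


/-- For every `μ < 0`,
`lim_{K→∞} L^{−dK} ln det(−Δ_K − μI)
  = (1 − L^{−d}) Σ_{k=0}^∞ L^{−dk} ln(L^{−2k}/(L² − 1) − μ)`,
where `−Δ_K` is the hierarchical Laplacean on `ℝ^{Λ_K}` (a matrix of order `L^{dK}`). -/
theorem hierarchical_log_det_limit
    (L d : ℕ) (hL : 2 ≤ L) (hd : 1 ≤ d) (μ : ℝ) (hμ : μ < 0) :
    Tendsto
      (fun K : ℕ =>
        ((L : ℝ) ^ (d * K))⁻¹ *
          Real.log (hierLap L d K - μ • (1 : Matrix _ _ ℝ)).det)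
      atTop
      (𝓝 ((1 - ((L : ℝ) ^ d)⁻¹) *
        ∑' k : ℕ,
          ((L : ℝ) ^ (d * k))⁻¹ *
            Real.log (((L : ℝ) ^ (2 * k))⁻¹ / ((L : ℝ) ^ 2 - 1) - μ))) := by
  have hLp := hLposR hL
  have h2R : (2 : ℝ) ≤ (L : ℝ) := hL2R hL
  set r : ℝ := ((L : ℝ) ^ d)⁻¹ with hr
  have hr0 : 0 < r := by positivity
  have h1d : (1 : ℝ) < (L : ℝ) ^ d := by
    have h := pow_lt_pow_left₀ (show (1 : ℝ) < (L : ℝ) by linarith) (by norm_num)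
      (show d ≠ 0 by omega)
    simpa using h
  have hrlt : r < 1 := inv_lt_one_of_one_lt₀ h1d
  have hcoef : ∀ j : ℕ, ((L : ℝ) ^ (d * j))⁻¹ = r ^ j := by
    intro j; rw [hr, inv_pow, ← pow_mul]
  have hlamInf : ∀ j : ℕ, ((L : ℝ) ^ (2 * j))⁻¹ / ((L : ℝ) ^ 2 - 1) = lamInf L j :=
    fun j => rfl
  set f : ℕ → ℝ := fun j => ((L : ℝ) ^ (d * j))⁻¹ *
      Real.log (((L : ℝ) ^ (2 * j))⁻¹ / ((L : ℝ) ^ 2 - 1) - μ) with hf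
  have hf' : ∀ j, f j = r ^ j * Real.log (lamInf L j - μ) := by
    intro j; simp only [hf]; rw [hcoef j, hlamInf j]
  have hpos : ∀ j, 0 < lamInf L j - μ := fun j => by have := lamInf_pos hL j; linarith
  -- summability of the limit series
  set M : ℝ := max |Real.log (-μ)| |Real.log (lamInf L 0 - μ)| with hM
  have hlogb : ∀ j, |Real.log (lamInf L j - μ)| ≤ M := by
    intro j
    have h1 : Real.log (-μ) ≤ Real.log (lamInf L j - μ) :=
      Real.log_le_log (by linarith) (by have := lamInf_pos hL j; linarith)
    have h2 : Real.log (lamInf L j - μ) ≤ Real.log (lamInf L 0 - μ) :=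
      Real.log_le_log (hpos j) (by have := lamInf_le hL j; linarith)
    rw [abs_le]
    constructor
    · have : -M ≤ -|Real.log (-μ)| := neg_le_neg (le_max_left _ _)
      calc -M ≤ -|Real.log (-μ)| := this
        _ ≤ Real.log (-μ) := neg_abs_le _
        _ ≤ _ := h1
    · exact h2.trans ((le_abs_self _).trans (le_max_right _ _))
  have hsummable : Summable f := by
    apply Summable.of_norm_bounded
      ((summable_geometric_of_lt_one hr0.le hrlt).mul_left M)
    intro j
    rw [hf' j, Real.norm_eq_abs, abs_mul, abs_pow, abs_of_pos hr0, mul_comm]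
    exact mul_le_mul_of_nonneg_right (hlogb j) (pow_nonneg hr0.le j)
  set S : ℕ → ℝ := fun K => ∑ j ∈ Finset.range K, f j with hS
  set G : ℕ → ℝ := fun K => ∑ j ∈ Finset.range K, r ^ j * Real.log (lamN L K j - μ) with hG
  -- pointwise identity
  have hfun : ∀ K : ℕ,
      ((L : ℝ) ^ (d * K))⁻¹ * Real.log (hierLap L d K - μ • (1 : Matrix _ _ ℝ)).det
        = r ^ K * Real.log (-μ) + (1 - r) * (S K - (S K - G K)) := by
    intro K
    rw [log_det_eq L d hL μ hμ K, hcoef]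
    have : (S K - (S K - G K)) = G K := by ring
    rw [this, hG]
    congr 2
    exact Finset.sum_congr rfl fun j _ => by rw [hcoef]
  -- the three limits
  have hA : Tendsto (fun K : ℕ => r ^ K * Real.log (-μ)) atTop (𝓝 0) := by
    simpa using
      (tendsto_pow_atTop_nhds_zero_of_lt_one hr0.le hrlt).mul_const (Real.log (-μ))
  have hStend : Tendsto S atTop (𝓝 (∑' k, f k)) := hsummable.hasSum.tendsto_sum_nat
  -- error term
  have hEterm : ∀ K : ℕ, ∀ j ∈ Finset.range K,
      0 ≤ f j - r ^ j * Real.log (lamN L K j - μ) ∧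
      f j - r ^ j * Real.log (lamN L K j - μ) ≤ r ^ j * (lamInf L K * (-μ)⁻¹) := by
    intro K j hj
    have hjK := Finset.mem_range.mp hj
    have ha : 0 < lamN L K j - μ := by have := lamN_nonneg L K j; linarith
    have hb : 0 < lamInf L j - μ := hpos j
    have hab : lamN L K j - μ ≤ lamInf L j - μ := by
      have := lamN_le hL hjK.le; linarith
    have hdiff : lamInf L j - μ - (lamN L K j - μ) = lamInf L K := by
      rw [lamN_eq hL hjK.le]; ring
    have hlog1 : Real.log (lamN L K j - μ) ≤ Real.log (lamInf L j - μ) :=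
      Real.log_le_log ha hab
    have hlog2 : Real.log (lamInf L j - μ) - Real.log (lamN L K j - μ)
        ≤ lamInf L K * (-μ)⁻¹ := by
      rw [← Real.log_div (ne_of_gt hb) (ne_of_gt ha)]
      have h2 : Real.log ((lamInf L j - μ) / (lamN L K j - μ))
          ≤ (lamInf L j - μ) / (lamN L K j - μ) - 1 :=
        Real.log_le_sub_one_of_pos (by positivity)
      have h3 : (lamInf L j - μ) / (lamN L K j - μ) - 1
          = lamInf L K / (lamN L K j - μ) := by
        rw [div_sub_one (ne_of_gt ha), hdiff]
      have h4 : lamInf L K / (lamN L K j - μ) ≤ lamInf L K / (-μ) := by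
        have hKpos := (lamInf_pos hL K).le
        have hN := lamN_nonneg L K j
        gcongr
        · linarith
        · linarith
      calc Real.log ((lamInf L j - μ) / (lamN L K j - μ))
          ≤ (lamInf L j - μ) / (lamN L K j - μ) - 1 := h2
        _ = lamInf L K / (lamN L K j - μ) := h3
        _ ≤ lamInf L K / (-μ) := h4
        _ = lamInf L K * (-μ)⁻¹ := div_eq_mul_inv _ _
    constructor
    · rw [hf' j]
      have : 0 ≤ r ^ j := pow_nonneg hr0.le j
      nlinarith [hlog1]
    · rw [hf' j]
      have h5 : r ^ j * (Real.log (lamInf L j - μ) - Real.log (lamN L K j - μ))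
          ≤ r ^ j * (lamInf L K * (-μ)⁻¹) :=
        mul_le_mul_of_nonneg_left hlog2 (pow_nonneg hr0.le j)
      nlinarith [h5]
  have hEbound : ∀ K : ℕ, S K - G K ≤ (1 - r)⁻¹ * (lamInf L K * (-μ)⁻¹) := by
    intro K
    rw [hS, hG, ← Finset.sum_sub_distrib]
    calc (∑ j ∈ Finset.range K, (f j - r ^ j * Real.log (lamN L K j - μ)))
        ≤ ∑ j ∈ Finset.range K, r ^ j * (lamInf L K * (-μ)⁻¹) :=
          Finset.sum_le_sum fun j hj => (hEterm K j hj).2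
      _ = (∑ j ∈ Finset.range K, r ^ j) * (lamInf L K * (-μ)⁻¹) := by
          rw [Finset.sum_mul]
      _ ≤ (1 - r)⁻¹ * (lamInf L K * (-μ)⁻¹) := by
          apply mul_le_mul_of_nonneg_right
          · calc (∑ j ∈ Finset.range K, r ^ j) ≤ ∑' j, r ^ j :=
                Summable.sum_le_tsum _ (fun j _ => pow_nonneg hr0.le j)
                  (summable_geometric_of_lt_one hr0.le hrlt)
              _ = (1 - r)⁻¹ := tsum_geometric_of_lt_one hr0.le hrlt
          · exact mul_nonneg (lamInf_pos hL K).le (inv_nonneg.mpr (by linarith))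
  have hEnonneg : ∀ K : ℕ, 0 ≤ S K - G K := by
    intro K
    rw [hS, hG, ← Finset.sum_sub_distrib]
    exact Finset.sum_nonneg fun j hj => (hEterm K j hj).1
  have hbound0 : Tendsto (fun K : ℕ => (1 - r)⁻¹ * (lamInf L K * (-μ)⁻¹)) atTop (𝓝 0) := by
    have hx0 : (0 : ℝ) ≤ ((L : ℝ) ^ 2)⁻¹ := by positivity
    have hx1 : ((L : ℝ) ^ 2)⁻¹ < 1 := inv_lt_one_of_one_lt₀ (by nlinarith)
    have h1 : Tendsto (fun K : ℕ => lamInf L K) atTop (𝓝 0) := by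
      have := (tendsto_pow_atTop_nhds_zero_of_lt_one hx0 hx1).mul_const (lamInf L 0)
      simp only [zero_mul] at this
      exact Tendsto.congr (fun K => (lamInf_eq_pow K).symm) this
    have := ((h1.mul_const ((-μ)⁻¹)).const_mul ((1 - r)⁻¹))
    simpa using this
  have hE : Tendsto (fun K : ℕ => S K - G K) atTop (𝓝 0) :=
    squeeze_zero hEnonneg hEbound hbound0
  have hfinal := hA.add ((hStend.sub hE).const_mul (1 - r))
  rw [show (0 : ℝ) + (1 - r) * ((∑' k, f k) - 0) = (1 - r) * ∑' k, f k by ring] at hfinal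
  exact Tendsto.congr (fun K => (hfun K).symm) hfinal

end
end

section
/- Fix an integer d ≥ 1, reals C > 0 and μ < 0, and let K = K(L) be any integer-valued function of real L > 1 with K(L) ln L → C as L ↓ 1. Then lim_{L↓1} (1 − L^{−d}) Σ_{k=0}^{K(L)} L^{−dk} [ (L−1)(L^{−2k} − L^{−2K(L)})/(L² − 1) − μ ]^{−1} = d ∫_0^C 2 e^{−dy} / ( e^{−2y} − e^{−2C} − 2μ ) dy = ∫_0^{(1−e^{−2C})/2} (λ − μ)^{−1} ρ'(λ) dλ, where ρ'(λ) = 2^{d/2} (d/2) ( λ + e^{−2C}/2 )^{d/2 − 1}. -/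
open Filter Topology MeasureTheory intervalIntegral Set

/-- The resolvent summand. -/
noncomputable def resol (μ L : ℝ) (m k : ℕ) : ℝ :=
  ((L - 1) * ((L ^ (2 * k))⁻¹ - (L ^ (2 * m))⁻¹) / (L ^ 2 - 1) - μ)⁻¹

/-- The step-function version of the summand. -/
noncomputable def stepF (d : ℕ) (μ : ℝ) (K : ℝ → ℕ) (L : ℝ) : ℝ → ℝ :=
  Set.indicator (Set.Ico 0 (((K L : ℝ) + 1) * Real.log L))
    (fun y => (d : ℝ) * Real.exp (-(d : ℝ) * y) * resol μ L (K L) ⌊y / Real.log L⌋₊)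

lemma phi_meas (d : ℕ) (μ L : ℝ) (m : ℕ) (t : ℝ) :
    Measurable (fun y : ℝ => (d : ℝ) * Real.exp (-(d : ℝ) * y) * resol μ L m ⌊y / t⌋₊) := by
  apply Measurable.mul
  · fun_prop
  · exact (measurable_from_nat (f := fun k : ℕ => resol μ L m k)).comp
      (Nat.measurable_floor.comp (measurable_id.div_const t))

lemma exp_coef {L : ℝ} (hL : 1 < L) (d m : ℕ) :
    Real.exp (-((d : ℝ) * ((m : ℝ) * Real.log L))) = ((L : ℝ) ^ (d * m))⁻¹ := by
  rw [Real.exp_neg]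
  congr 1
  rw [show (d : ℝ) * ((m : ℝ) * Real.log L) = ((d * m : ℕ) : ℝ) * Real.log L by
      push_cast; ring,
    Real.exp_nat_mul, Real.exp_log (by linarith)]

lemma ftc_exp (d : ℕ) (r a b : ℝ) :
    ∫ x in a..b, (d : ℝ) * Real.exp (-(d : ℝ) * x) * r
      = (Real.exp (-(d : ℝ) * a) - Real.exp (-(d : ℝ) * b)) * r := by
  have h : ∀ x ∈ Set.uIcc a b, HasDerivAt (fun y => -Real.exp (-(d : ℝ) * y) * r)
      ((d : ℝ) * Real.exp (-(d : ℝ) * x) * r) x := by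
    intro x _
    have h1 : HasDerivAt (fun y : ℝ => -(d : ℝ) * y) (-(d : ℝ)) x := by
      simpa using (hasDerivAt_id x).const_mul (-(d : ℝ))
    have h2 := (((Real.hasDerivAt_exp (-(d : ℝ) * x)).comp x h1).neg).mul_const r
    exact h2.congr_deriv (by ring)
  rw [intervalIntegral.integral_eq_sub_of_hasDerivAt h
    ((by fun_prop : Continuous fun x : ℝ =>
      (d : ℝ) * Real.exp (-(d : ℝ) * x) * r).intervalIntegrable a b)]
  ring

lemma sum_eq_integral (d : ℕ) (μ : ℝ) (K : ℝ → ℕ) {L : ℝ} (hL : 1 < L) :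
    (1 - (L ^ d)⁻¹) * ∑ k ∈ Finset.range (K L + 1),
        (L ^ (d * k))⁻¹ * resol μ L (K L) k
      = ∫ y, stepF d μ K L y := by
  have hL0 : (0 : ℝ) < L := by linarith
  set t := Real.log L with ht
  have ht0 : 0 < t := Real.log_pos hL
  set n := K L with hn
  set φ : ℝ → ℝ := fun y => (d : ℝ) * Real.exp (-(d : ℝ) * y) * resol μ L n ⌊y / t⌋₊ with hφ
  have hfloor : ∀ (k : ℕ) (y : ℝ), y ∈ Set.Ico ((k : ℝ) * t) (((k : ℝ) + 1) * t) →
      ⌊y / t⌋₊ = k := by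
    intro k y hy
    have h0 : (0 : ℝ) ≤ y := le_trans (by positivity) hy.1
    rw [Nat.floor_eq_iff (by positivity)]
    constructor
    · rw [le_div_iff₀ ht0]; exact hy.1
    · rw [div_lt_iff₀ ht0]; exact hy.2
  have hpieceEq : ∀ k : ℕ,
      Set.EqOn (fun y => (d : ℝ) * Real.exp (-(d : ℝ) * y) * resol μ L n k) φ
        (Set.Ico ((k : ℝ) * t) (((k : ℝ) + 1) * t)) := by
    intro k y hy
    simp only [hφ, hfloor k y hy]
  have hpieceInt : ∀ k : ℕ,
      IntegrableOn φ (Set.Ico ((k : ℝ) * t) (((k : ℝ) + 1) * t)) := by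
    intro k
    refine IntegrableOn.congr_fun ?_ (hpieceEq k) measurableSet_Ico
    exact ((by fun_prop : Continuous fun y : ℝ =>
      (d : ℝ) * Real.exp (-(d : ℝ) * y) * resol μ L n k).integrableOn_Icc).mono_set
      Set.Ico_subset_Icc_self
  have hpieceVal : ∀ k : ℕ, ∫ y in Set.Ico ((k : ℝ) * t) (((k : ℝ) + 1) * t), φ y
      = (Real.exp (-(d : ℝ) * ((k : ℝ) * t)) - Real.exp (-(d : ℝ) * (((k : ℝ) + 1) * t)))
          * resol μ L n k := by
    intro k
    rw [← MeasureTheory.setIntegral_congr_fun measurableSet_Ico (hpieceEq k),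
      MeasureTheory.integral_Ico_eq_integral_Ioo, ← MeasureTheory.integral_Ioc_eq_integral_Ioo,
      ← intervalIntegral.integral_of_le (by nlinarith : (k : ℝ) * t ≤ ((k : ℝ) + 1) * t)]
    exact ftc_exp d (resol μ L n k) _ _
  have main : ∀ j : ℕ, IntegrableOn φ (Set.Ico (0 : ℝ) ((j : ℝ) * t)) ∧
      ∫ y in Set.Ico (0 : ℝ) ((j : ℝ) * t), φ y
        = ∑ k ∈ Finset.range j,
            (Real.exp (-(d : ℝ) * ((k : ℝ) * t)) - Real.exp (-(d : ℝ) * (((k : ℝ) + 1) * t)))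
              * resol μ L n k := by
    intro j
    induction j with
    | zero => simp
    | succ j ih =>
      have hcast : ((j + 1 : ℕ) : ℝ) = (j : ℝ) + 1 := by push_cast; ring
      have hsplit : Set.Ico (0 : ℝ) ((j : ℝ) * t) ∪
          Set.Ico ((j : ℝ) * t) (((j : ℝ) + 1) * t) = Set.Ico (0 : ℝ) (((j : ℝ) + 1) * t) :=
        Set.Ico_union_Ico_eq_Ico (by positivity) (by nlinarith)
      have hdisj : Disjoint (Set.Ico (0 : ℝ) ((j : ℝ) * t))
          (Set.Ico ((j : ℝ) * t) (((j : ℝ) + 1) * t)) :=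
        Set.Ico_disjoint_Ico_same
      constructor
      · rw [hcast, ← hsplit]
        exact ih.1.union (hpieceInt j)
      · rw [hcast, ← hsplit,
          MeasureTheory.setIntegral_union hdisj measurableSet_Ico ih.1 (hpieceInt j),
          ih.2, hpieceVal j, Finset.sum_range_succ]
  have hInd : ∫ y, stepF d μ K L y = ∫ y in Set.Ico (0 : ℝ) (((n : ℝ) + 1) * t), φ y := by
    rw [stepF, MeasureTheory.integral_indicator measurableSet_Ico]
  rw [hInd, show ((n : ℝ) + 1) = ((n + 1 : ℕ) : ℝ) by push_cast; ring, (main (n + 1)).2,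
    Finset.mul_sum]
  refine Finset.sum_congr rfl fun k _ => ?_
  rw [show -(d : ℝ) * ((k : ℝ) * t) = -((d : ℝ) * ((k : ℝ) * t)) by ring, exp_coef hL d k,
    show -(d : ℝ) * (((k : ℝ) + 1) * t) = -((d : ℝ) * (((k + 1 : ℕ) : ℝ) * t)) by
      push_cast; ring,
    exp_coef hL d (k + 1), show d * (k + 1) = d * k + d by ring, pow_add, mul_inv]
  ring

lemma stepF_bound {d : ℕ} {μ : ℝ} (hμ : μ < 0) {K : ℝ → ℕ} {L : ℝ} (hL : 1 < L) {C : ℝ}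
    (hlt : ((K L : ℝ) + 1) * Real.log L < C + 1) (y : ℝ) :
    ‖stepF d μ K L y‖ ≤ Set.indicator (Set.Ico (0 : ℝ) (C + 1))
      (fun _ => (d : ℝ) * (-μ)⁻¹) y := by
  by_cases hy : y ∈ Set.Ico (0 : ℝ) (((K L : ℝ) + 1) * Real.log L)
  · rw [stepF, Set.indicator_of_mem hy, Set.indicator_of_mem (Set.mem_Ico.mpr ⟨hy.1, lt_trans hy.2 hlt⟩)]
    have ht0 : 0 < Real.log L := Real.log_pos hL
    have hy0 : (0 : ℝ) ≤ y := hy.1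
    set k := ⌊y / Real.log L⌋₊ with hk
    have hkn : k ≤ K L := by
      have h1 : y / Real.log L < (K L : ℝ) + 1 := by
        rw [div_lt_iff₀ ht0]; exact hy.2
      have h2 := (Nat.floor_lt (by positivity)).mpr (by push_cast; linarith : y / Real.log L < ((K L + 1 : ℕ) : ℝ))
      omega
    have hL0 : (0 : ℝ) < L := by linarith
    have hpow : (L : ℝ) ^ (2 * k) ≤ L ^ (2 * K L) :=
      pow_le_pow_right₀ hL.le (by omega)
    have hΔ : 0 ≤ ((L : ℝ) ^ (2 * k))⁻¹ - (L ^ (2 * K L))⁻¹ :=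
      sub_nonneg.mpr (inv_anti₀ (by positivity) hpow)
    have hL2 : (0 : ℝ) < L ^ 2 - 1 := by nlinarith
    have hterm : 0 ≤ (L - 1) * (((L : ℝ) ^ (2 * k))⁻¹ - (L ^ (2 * K L))⁻¹) / (L ^ 2 - 1) :=
      div_nonneg (mul_nonneg (by linarith) hΔ) hL2.le
    have hres : resol μ L (K L) k ≤ (-μ)⁻¹ := by
      rw [resol]
      exact inv_anti₀ (by linarith) (by linarith)
    have hres0 : 0 ≤ resol μ L (K L) k := by
      rw [resol]
      exact inv_nonneg.mpr (by linarith)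
    rw [Real.norm_eq_abs, abs_of_nonneg (mul_nonneg (by positivity) hres0)]
    calc (d : ℝ) * Real.exp (-(d : ℝ) * y) * resol μ L (K L) k
        ≤ (d : ℝ) * 1 * (-μ)⁻¹ := by
          refine mul_le_mul ?_ hres hres0 (by positivity)
          refine mul_le_mul_of_nonneg_left (Real.exp_le_one_iff.mpr ?_) (by positivity)
          have : (0 : ℝ) ≤ (d : ℝ) * y := by positivity
          linarith
      _ = (d : ℝ) * (-μ)⁻¹ := by ring
  · rw [stepF, Set.indicator_of_notMem hy, norm_zero]
    exact Set.indicator_nonneg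
      (fun _ _ => mul_nonneg (by positivity) (inv_nonneg.mpr (by linarith))) y

lemma part2 (d : ℕ) (hd : 1 ≤ d) (C : ℝ) (hC : 0 < C) (μ : ℝ) (hμ : μ < 0) :
    (d : ℝ) * (∫ y in (0:ℝ)..C,
        2 / (Real.exp (-2*y) - Real.exp (-2*C) - 2*μ) * Real.exp (-(d:ℝ)*y))
      = ∫ lam in (0:ℝ)..((1 - Real.exp (-2*C))/2),
          (lam - μ)⁻¹ * ((2:ℝ) ^ ((d:ℝ)/2) * ((d:ℝ)/2) *
            (lam + Real.exp (-2*C)/2) ^ ((d:ℝ)/2 - 1)) := by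
  set E := Real.exp (-2*C) with hE
  have hE0 : 0 < E := Real.exp_pos _
  set g : ℝ → ℝ := fun lam => (lam - μ)⁻¹ *
    ((2:ℝ) ^ ((d:ℝ)/2) * ((d:ℝ)/2) * (lam + E/2) ^ ((d:ℝ)/2 - 1)) with hg
  set f : ℝ → ℝ := fun y => (Real.exp (-2*y) - E)/2 with hf
  have hderiv : ∀ x ∈ uIcc (0:ℝ) C, HasDerivAt f (-(Real.exp (-2*x))) x := by
    intro x _
    have h1 : HasDerivAt (fun y : ℝ => -2*y) (-2) x := by
      simpa using (hasDerivAt_id x).const_mul (-2)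
    have h2 := (Real.hasDerivAt_exp (-2*x)).comp x h1
    have h3 := (h2.sub_const E).div_const 2
    exact h3.congr_deriv (by ring)
  have h' : ContinuousOn (fun x => -(Real.exp (-2*x))) (uIcc 0 C) :=
    ((Real.continuous_exp.comp (by continuity)).neg).continuousOn
  have himg : f '' uIcc 0 C ⊆ Ici 0 := by
    rintro _ ⟨x, hx, rfl⟩
    rw [uIcc_of_le hC.le] at hx
    have : E ≤ Real.exp (-2*x) := Real.exp_le_exp.mpr (by linarith [hx.2])
    simp only [hf, mem_Ici]
    linarith
  have hgC : ContinuousOn g (f '' uIcc 0 C) := by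
    refine ContinuousOn.mono ?_ himg
    apply ContinuousOn.mul
    · exact (continuousOn_id.sub continuousOn_const).inv₀
        fun x hx => by change x - μ ≠ 0; intro h; nlinarith [mem_Ici.mp hx]
    · exact continuousOn_const.mul <|
        (continuousOn_id.add continuousOn_const).rpow_const
          fun x hx => Or.inl (by
            have := mem_Ici.mp hx
            change x + E/2 ≠ 0
            intro h; nlinarith)
  have key := integral_comp_smul_deriv' hderiv h' hgC
  have hf0 : f 0 = (1 - E)/2 := by simp [hf]
  have hfC : f C = 0 := by
    show (Real.exp (-2*C) - E)/2 = 0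
    rw [← hE]; ring
  have hLHS : (∫ x in (0:ℝ)..C, (-(Real.exp (-2*x))) • (g ∘ f) x)
      = ∫ x in (0:ℝ)..C,
          -((d:ℝ) * (2 / (Real.exp (-2*x) - E - 2*μ) * Real.exp (-(d:ℝ)*x))) := by
    refine integral_congr fun x hx => ?_
    rw [uIcc_of_le hC.le] at hx
    have hu : (0:ℝ) < Real.exp (-2*x) := Real.exp_pos _
    have hEu : E ≤ Real.exp (-2*x) := Real.exp_le_exp.mpr (by linarith [hx.2])
    have hA : (0:ℝ) < Real.exp (-2*x) - E - 2*μ := by linarith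
    have h1 : f x + E/2 = Real.exp (-2*x) / 2 := by simp only [hf]; ring
    have h2 : f x - μ = (Real.exp (-2*x) - E - 2*μ)/2 := by simp only [hf]; ring
    have hB : (0:ℝ) < (2:ℝ)^((d:ℝ)/2) := Real.rpow_pos_of_pos two_pos _
    have h3 : (Real.exp (-2*x)/2) ^ ((d:ℝ)/2-1)
        = Real.exp (-(d:ℝ)*x) * (Real.exp (-2*x))⁻¹ * ((2:ℝ)^((d:ℝ)/2))⁻¹ * 2 := by
      rw [Real.div_rpow hu.le (by norm_num : (0:ℝ) ≤ 2)]
      have ha : (Real.exp (-2*x)) ^ ((d:ℝ)/2 - 1)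
          = Real.exp (-(d:ℝ)*x) * (Real.exp (-2*x))⁻¹ := by
        rw [← Real.exp_mul, ← Real.exp_neg, ← Real.exp_add]; congr 1; ring
      have hb : (2:ℝ) ^ ((d:ℝ)/2 - 1) = (2:ℝ)^((d:ℝ)/2) / 2 := by
        rw [Real.rpow_sub (by norm_num), Real.rpow_one]
      rw [ha, hb, div_div_eq_mul_div, div_eq_mul_inv]; ring
    simp only [Function.comp, smul_eq_mul, hg]
    rw [h1, h2, h3, inv_div]
    have hc1 : Real.exp (-2*x) * (Real.exp (-2*x))⁻¹ = 1 := mul_inv_cancel₀ hu.ne'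
    have hc2 : (2:ℝ)^((d:ℝ)/2) * ((2:ℝ)^((d:ℝ)/2))⁻¹ = 1 := mul_inv_cancel₀ hB.ne'
    linear_combination (-2*(d:ℝ)/(Real.exp (-2*x) - E - 2*μ) * Real.exp (-(d:ℝ)*x)
        * Real.exp (-2*x) * (Real.exp (-2*x))⁻¹) * hc2
      + (-2*(d:ℝ)/(Real.exp (-2*x) - E - 2*μ) * Real.exp (-(d:ℝ)*x)) * hc1
  rw [hLHS, hf0, hfC] at key
  rw [intervalIntegral.integral_neg, intervalIntegral.integral_const_mul,
    intervalIntegral.integral_symm 0 ((1-E)/2)] at key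
  exact neg_injective key

/-- Continuum (`L ↓ 1`) limit of the resolvent trace of the hierarchical
Laplacean.  Fix `d ≥ 1`, `C > 0`, `μ < 0` and an integer-valued function `K(L)` of the real
parameter `L > 1` with `K(L) ln L → C` as `L ↓ 1`.  Then
`lim_{L↓1} (1 − L^{−d}) Σ_{k=0}^{K(L)} L^{−dk} [(L−1)(L^{−2k} − L^{−2K(L)})/(L²−1) − μ]⁻¹
 = d ∫_0^C 2 e^{−dy}/(e^{−2y} − e^{−2C} − 2μ) dy
 = ∫_0^{(1−e^{−2C})/2} (λ − μ)⁻¹ ρ'(λ) dλ`, with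
`ρ'(λ) = 2^{d/2}(d/2)(λ + e^{−2C}/2)^{d/2−1}`. -/
theorem continuum_hierarchical_resolvent_trace
    (d : ℕ) (hd : 1 ≤ d) (C : ℝ) (hC : 0 < C) (μ : ℝ) (hμ : μ < 0)
    (K : ℝ → ℕ)
    (hK : Tendsto (fun L : ℝ => (K L : ℝ) * Real.log L) (𝓝[>] (1 : ℝ)) (𝓝 C)) :
    Tendsto
        (fun L : ℝ =>
          (1 - (L ^ d)⁻¹) *
            ∑ k ∈ Finset.range (K L + 1),
              (L ^ (d * k))⁻¹ *
                ((L - 1) * ((L ^ (2 * k))⁻¹ - (L ^ (2 * K L))⁻¹) / (L ^ 2 - 1) - μ)⁻¹)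
        (𝓝[>] (1 : ℝ))
        (𝓝 ((d : ℝ) *
          ∫ y in (0 : ℝ)..C,
            2 / (Real.exp (-2 * y) - Real.exp (-2 * C) - 2 * μ) * Real.exp (-(d : ℝ) * y))) ∧
      (d : ℝ) *
          (∫ y in (0 : ℝ)..C,
            2 / (Real.exp (-2 * y) - Real.exp (-2 * C) - 2 * μ) * Real.exp (-(d : ℝ) * y)) =
        ∫ lam in (0 : ℝ)..((1 - Real.exp (-2 * C)) / 2),
          (lam - μ)⁻¹ *
            ((2 : ℝ) ^ ((d : ℝ) / 2) * ((d : ℝ) / 2) *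
              (lam + Real.exp (-2 * C) / 2) ^ ((d : ℝ) / 2 - 1)) := by
  have hL1 : ∀ᶠ L in 𝓝[>] (1 : ℝ), 1 < L := eventually_mem_nhdsWithin
  have hlog : Tendsto (fun L : ℝ => Real.log L) (𝓝[>] 1) (𝓝 0) := by
    have h := (Real.continuousAt_log (by norm_num : (1 : ℝ) ≠ 0)).tendsto
    rw [Real.log_one] at h
    exact h.mono_left nhdsWithin_le_nhds
  have hKt1 : Tendsto (fun L : ℝ => ((K L : ℝ) + 1) * Real.log L) (𝓝[>] 1) (𝓝 C) := by
    have h := hK.add hlog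
    rw [add_zero] at h
    exact h.congr fun L => by ring
  constructor
  · set G : ℝ → ℝ := Set.indicator (Set.Ioo 0 C)
        (fun y => (d : ℝ) * Real.exp (-(d : ℝ) * y) *
          (2 / (Real.exp (-2 * y) - Real.exp (-2 * C) - 2 * μ))) with hG
    have hGint : ∫ y, G y = (d : ℝ) * ∫ y in (0 : ℝ)..C,
        2 / (Real.exp (-2 * y) - Real.exp (-2 * C) - 2 * μ) * Real.exp (-(d : ℝ) * y) := by
      rw [hG, MeasureTheory.integral_indicator measurableSet_Ioo,
        ← MeasureTheory.integral_Ioc_eq_integral_Ioo,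
        ← intervalIntegral.integral_of_le hC.le, ← intervalIntegral.integral_const_mul]
      exact intervalIntegral.integral_congr fun x _ => by ring
    have hDCT : Tendsto (fun L => ∫ y, stepF d μ K L y) (𝓝[>] (1 : ℝ)) (𝓝 (∫ y, G y)) := by
      apply MeasureTheory.tendsto_integral_filter_of_dominated_convergence
        (Set.indicator (Set.Ico (0 : ℝ) (C + 1)) fun _ => (d : ℝ) * (-μ)⁻¹)
      · exact Eventually.of_forall fun L =>
          ((phi_meas d μ L (K L) (Real.log L)).indicator measurableSet_Ico).aestronglyMeasurable
      · filter_upwards [hL1, hKt1.eventually_lt_const (by linarith : C < C + 1)] with L hL hlt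
        exact MeasureTheory.ae_of_all _ (stepF_bound hμ hL hlt)
      · rw [MeasureTheory.integrable_indicator_iff measurableSet_Ico]
        exact integrableOn_const measure_Ico_lt_top.ne
      · have hae : ∀ᵐ (y : ℝ), y ∉ ({0, C} : Set ℝ) :=
          (((Set.finite_singleton C).insert 0).countable).ae_notMem _
        filter_upwards [hae] with y hy
        simp only [Set.mem_insert_iff, Set.mem_singleton_iff, not_or] at hy
        obtain ⟨hy0, hyC⟩ := hy
        rcases lt_trichotomy y 0 with hneg | h0 | hpos
        · have hGy : G y = 0 :=
            Set.indicator_of_notMem (fun h => absurd h.1 (by linarith)) _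
          rw [hGy]
          exact tendsto_const_nhds.congr fun L => by
            rw [stepF, Set.indicator_of_notMem (fun h : y ∈ _ => absurd h.1 (by linarith))]
        · exact absurd h0 hy0
        rcases lt_trichotomy y C with hyltC | h1 | hgtC
        · -- main case 0 < y < C
          have hGy : G y = (d : ℝ) * Real.exp (-(d : ℝ) * y) *
              (2 / (Real.exp (-2 * y) - Real.exp (-2 * C) - 2 * μ)) := by
            rw [hG]; exact Set.indicator_of_mem (Set.mem_Ioo.mpr ⟨hpos, hyltC⟩) _
          rw [hGy]
          have hs : Tendsto (fun L : ℝ => (⌊y / Real.log L⌋₊ : ℝ) * Real.log L)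
              (𝓝[>] 1) (𝓝 y) := by
            apply tendsto_of_tendsto_of_tendsto_of_le_of_le'
              (g := fun L : ℝ => y - Real.log L) (h := fun _ => y)
            · simpa using (tendsto_const_nhds (α := ℝ) (x := y)
                (f := 𝓝[>] (1:ℝ))).sub hlog
            · exact tendsto_const_nhds
            · filter_upwards [hL1] with L hL
              have ht0 : 0 < Real.log L := Real.log_pos hL
              have h2 := Nat.sub_one_lt_floor (y / Real.log L)
              have h3 := mul_lt_mul_of_pos_right h2 ht0
              rw [sub_mul, div_mul_cancel₀ _ ht0.ne', one_mul] at h3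
              linarith
            · filter_upwards [hL1] with L hL
              have ht0 : 0 < Real.log L := Real.log_pos hL
              have h2 := Nat.floor_le (show 0 ≤ y / Real.log L by positivity)
              have h3 := mul_le_mul_of_nonneg_right h2 ht0.le
              rwa [div_mul_cancel₀ _ ht0.ne'] at h3
          have T1 : Tendsto
              (fun L : ℝ => Real.exp (-(2 * ((⌊y / Real.log L⌋₊ : ℝ) * Real.log L))))
              (𝓝[>] 1) (𝓝 (Real.exp (-(2 * y)))) :=
            (Real.continuous_exp.tendsto _).comp ((hs.const_mul 2).neg)
          have T2 : Tendsto (fun L : ℝ => Real.exp (-(2 * ((K L : ℝ) * Real.log L))))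
              (𝓝[>] 1) (𝓝 (Real.exp (-(2 * C)))) :=
            (Real.continuous_exp.tendsto _).comp ((hK.const_mul 2).neg)
          have T3 : Tendsto (fun L : ℝ => L + 1) (𝓝[>] 1) (𝓝 2) := by
            have h : Tendsto (fun L : ℝ => L + 1) (𝓝 (1 : ℝ)) (𝓝 ((1 : ℝ) + 1)) :=
              tendsto_id.add tendsto_const_nhds
            norm_num at h
            exact h.mono_left nhdsWithin_le_nhds
          have hden : Tendsto (fun L : ℝ =>
              (Real.exp (-(2 * ((⌊y / Real.log L⌋₊ : ℝ) * Real.log L)))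
                - Real.exp (-(2 * ((K L : ℝ) * Real.log L)))) / (L + 1) - μ)
              (𝓝[>] 1)
              (𝓝 ((Real.exp (-(2 * y)) - Real.exp (-(2 * C))) / 2 - μ)) :=
            ((T1.sub T2).div T3 two_ne_zero).sub_const μ
          have hexpy : Real.exp (-(2 * C)) < Real.exp (-(2 * y)) :=
            Real.exp_lt_exp.mpr (by linarith)
          have hne : (Real.exp (-(2 * y)) - Real.exp (-(2 * C))) / 2 - μ ≠ 0 := by
            have : 0 < (Real.exp (-(2 * y)) - Real.exp (-(2 * C))) / 2 - μ := by linarith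
            exact this.ne'
          have hres : Tendsto (fun L : ℝ => resol μ L (K L) ⌊y / Real.log L⌋₊) (𝓝[>] 1)
              (𝓝 (((Real.exp (-(2 * y)) - Real.exp (-(2 * C))) / 2 - μ)⁻¹)) := by
            refine Tendsto.congr' ?_ (hden.inv₀ hne)
            filter_upwards [hL1] with L hL
            rw [resol, ← exp_coef hL 2 ⌊y / Real.log L⌋₊, ← exp_coef hL 2 (K L),
              Nat.cast_ofNat]
            congr 2
            rw [show L ^ 2 - 1 = (L - 1) * (L + 1) by ring,
              mul_div_mul_left _ _ (by linarith : L - 1 ≠ 0)]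
          have hval : ((Real.exp (-(2 * y)) - Real.exp (-(2 * C))) / 2 - μ)⁻¹
              = 2 / (Real.exp (-2 * y) - Real.exp (-2 * C) - 2 * μ) := by
            rw [show (-(2 * y)) = (-2 * y) by ring, show (-(2 * C)) = (-2 * C) by ring,
              show (Real.exp (-2 * y) - Real.exp (-2 * C)) / 2 - μ
                = (Real.exp (-2 * y) - Real.exp (-2 * C) - 2 * μ) / 2 by ring, inv_div]
          have hfin := hres.const_mul ((d : ℝ) * Real.exp (-(d : ℝ) * y))
          rw [hval] at hfin
          refine Tendsto.congr' ?_ hfin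
          filter_upwards [hL1, hKt1.eventually_const_lt hyltC] with L hL hlt
          rw [stepF, Set.indicator_of_mem (Set.mem_Ico.mpr ⟨hpos.le, hlt⟩)]
        · exact absurd h1 hyC
        · have hGy : G y = 0 :=
            Set.indicator_of_notMem (fun h => absurd h.2 (by linarith)) _
          rw [hGy]
          refine Tendsto.congr' ?_ (tendsto_const_nhds (x := (0 : ℝ)))
          filter_upwards [hKt1.eventually_lt_const hgtC] with L hL
          rw [stepF, Set.indicator_of_notMem
            (fun h : y ∈ _ => absurd h.2 (by linarith [hL]))]
    rw [hGint] at hDCT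
    exact hDCT.congr' (hL1.mono fun L hL => (sum_eq_integral d μ K hL).symm)
  · exact part2 d hd C hC μ hμ
end
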